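/- Let P*_{W₁|XY} and P*_{W₂|XY} be any two optimal test channels achieving R(r1*,r2*|P_XY), with induced output distributions P_{W₁*}, P_{W₂*} and conditional distributions P_{X|Wᵢ*}, P_{Y|Wᵢ*}. Then for every (x,y) in the support of P_XY, Λ(x,y|P_{W₁*},P_{X|W₁*},P_{Y|W₁*},λ1*,λ2*) = Λ(x,y|P_{W₂*},P_{X|W₂*},P_{Y|W₂*},λ1*,λ2*). In particular, the tilted information density ȷ_XY(x,y) := Λ(x,y|P_{W*},P_{X|W*},P_{Y|W*},λ1*,λ2*) is well-defined irrespective of the choice of optimal test channel. -/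

import Mathlib

open Finset Filter MeasureTheory

attribute [local instance] Classical.propDecidable

namespace GW

noncomputable section

/-- Shannon entropy (base 2) of a distribution on a finite alphabet,
with the convention `0 * log 0 = 0`. -/
def ent {α : Type*} [Fintype α] (p : α → ℝ) : ℝ := -∑ a, p a * Real.logb 2 (p a)

/-- `p` is a probability distribution on a finite alphabet. -/
def IsProb {α : Type*} [Fintype α] (p : α → ℝ) : Prop :=
  (∀ a, 0 ≤ p a) ∧ ∑ a, p a = 1

/-- `K` is a channel (a conditional probability distribution). -/
def IsChannel {α β : Type*} [Fintype α] [Fintype β] (K : α → β → ℝ) : Prop :=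
  ∀ a, IsProb (K a)

variable {𝒳 𝒴 𝒲 : Type*} [Fintype 𝒳] [Fintype 𝒴] [Fintype 𝒲]

/-- Output distribution `P_W` on `𝒲` induced by the source `p` on `𝒳 × 𝒴`
and the test channel `K`. -/
def outW (p : 𝒳 × 𝒴 → ℝ) (K : 𝒳 × 𝒴 → 𝒲 → ℝ) (w : 𝒲) : ℝ := ∑ a, p a * K a w

/-- Joint distribution of `(W, X, Y)`. -/
def jointW (p : 𝒳 × 𝒴 → ℝ) (K : 𝒳 × 𝒴 → 𝒲 → ℝ) : 𝒲 × 𝒳 × 𝒴 → ℝ :=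
  fun z => p z.2 * K z.2 z.1

/-- Joint distribution of `(W, X)`. -/
def margWX (p : 𝒳 × 𝒴 → ℝ) (K : 𝒳 × 𝒴 → 𝒲 → ℝ) : 𝒲 × 𝒳 → ℝ :=
  fun z => ∑ y, p (z.2, y) * K (z.2, y) z.1

/-- Joint distribution of `(W, Y)`. -/
def margWY (p : 𝒳 × 𝒴 → ℝ) (K : 𝒳 × 𝒴 → 𝒲 → ℝ) : 𝒲 × 𝒴 → ℝ :=
  fun z => ∑ x, p (x, z.2) * K (x, z.2) z.1

/-- Mutual information `I(W ∧ X,Y)` (base 2). -/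
def mutInfoW (p : 𝒳 × 𝒴 → ℝ) (K : 𝒳 × 𝒴 → 𝒲 → ℝ) : ℝ :=
  ent (outW p K) + ent p - ent (jointW p K)

/-- Conditional entropy `H(X|W)`. -/
def condEntX (p : 𝒳 × 𝒴 → ℝ) (K : 𝒳 × 𝒴 → 𝒲 → ℝ) : ℝ :=
  ent (margWX p K) - ent (outW p K)

/-- Conditional entropy `H(Y|W)`. -/
def condEntY (p : 𝒳 × 𝒴 → ℝ) (K : 𝒳 × 𝒴 → 𝒲 → ℝ) : ℝ :=
  ent (margWY p K) - ent (outW p K)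

/-- Conditional distribution `P_{X|W}` induced by `p` and `K`. -/
def condXW (p : 𝒳 × 𝒴 → ℝ) (K : 𝒳 × 𝒴 → 𝒲 → ℝ) (w : 𝒲) (x : 𝒳) : ℝ :=
  margWX p K (w, x) / outW p K w

/-- Conditional distribution `P_{Y|W}` induced by `p` and `K`. -/
def condYW (p : 𝒳 × 𝒴 → ℝ) (K : 𝒳 × 𝒴 → 𝒲 → ℝ) (w : 𝒲) (y : 𝒴) : ℝ :=
  margWY p K (w, y) / outW p K w

/-- The Gray–Wyner first-order rate function
`R(r1,r2|P) = min { I(W ∧ X,Y) : |𝒲| ≤ |𝒳||𝒴|+2, H(X|W) ≤ r1, H(Y|W) ≤ r2 }`. -/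
def Rgw (p : 𝒳 × 𝒴 → ℝ) (r1 r2 : ℝ) : ℝ :=
  sInf { ρ : ℝ | ∃ k, k ≤ Fintype.card 𝒳 * Fintype.card 𝒴 + 2 ∧
    ∃ K : 𝒳 × 𝒴 → Fin k → ℝ, IsChannel K ∧
      condEntX p K ≤ r1 ∧ condEntY p K ≤ r2 ∧ ρ = mutInfoW p K }

/-- `K` is an optimal test channel achieving `R(r1,r2|p)`. -/
def IsOptChannel (p : 𝒳 × 𝒴 → ℝ) (r1 r2 : ℝ) {k : ℕ} (K : 𝒳 × 𝒴 → Fin k → ℝ) : Prop :=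
  k ≤ Fintype.card 𝒳 * Fintype.card 𝒴 + 2 ∧ IsChannel K ∧
    condEntX p K ≤ r1 ∧ condEntY p K ≤ r2 ∧ mutInfoW p K = Rgw p r1 r2

/-- The function `Λ(x,y|Q_W̄, Q_{X̂|Ŵ}, Q_{Ŷ|Ŵ}, λ1, λ2)`;
terms with a vanishing conditional probability are taken to be `0`. -/
def Lam (r1 r2 lam1 lam2 : ℝ) (QW : 𝒲 → ℝ) (QX : 𝒲 → 𝒳 → ℝ) (QY : 𝒲 → 𝒴 → ℝ)
    (x : 𝒳) (y : 𝒴) : ℝ :=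
  - Real.logb 2 (∑ w, QW w *
      (if QX w x = 0 ∨ QY w y = 0 then 0 else
        (2 : ℝ) ^ (lam1 * (r1 + Real.logb 2 (QX w x)) + lam2 * (r2 + Real.logb 2 (QY w y)))))

/-- The function
`F(P_{W|XY},P_W̄,P_{X̂|Ŵ},P_{Ŷ|Ŵ}) = D(P_{W|XY}‖P_W̄|P_XY) + λ1 E[log 1/P_{X̂|Ŵ}(X|W) - r1] + λ2 E[log 1/P_{Ŷ|Ŵ}(Y|W) - r2]`. -/
def Ffun (p : 𝒳 × 𝒴 → ℝ) (r1 r2 lam1 lam2 : ℝ) (K : 𝒳 × 𝒴 → 𝒲 → ℝ)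
    (QW : 𝒲 → ℝ) (QX : 𝒲 → 𝒳 → ℝ) (QY : 𝒲 → 𝒴 → ℝ) : ℝ :=
  (∑ a : 𝒳 × 𝒴, ∑ w, p a * K a w * Real.logb 2 (K a w / QW w))
    + lam1 * (∑ a : 𝒳 × 𝒴, ∑ w, p a * K a w * (-Real.logb 2 (QX w a.1) - r1))
    + lam2 * (∑ a : 𝒳 × 𝒴, ∑ w, p a * K a w * (-Real.logb 2 (QY w a.2) - r2))

/-- The tilted information density for the Gray–Wyner network, built from an
(optimal) test channel `K` via its induced output and conditional distributions. -/
def tiltedInfo (p : 𝒳 × 𝒴 → ℝ) (r1 r2 lam1 lam2 : ℝ) {k : ℕ}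
    (K : 𝒳 × 𝒴 → Fin k → ℝ) (x : 𝒳) (y : 𝒴) : ℝ :=
  Lam r1 r2 lam1 lam2 (outW p K) (condXW p K) (condYW p K) x y

/-- The explicit optimizing channel of Lemma 1. -/
def Kstar (r1 r2 lam1 lam2 : ℝ) (QW : 𝒲 → ℝ) (QX : 𝒲 → 𝒳 → ℝ) (QY : 𝒲 → 𝒴 → ℝ) :
    𝒳 × 𝒴 → 𝒲 → ℝ :=
  fun a w => if QX w a.1 = 0 ∨ QY w a.2 = 0 then 0 else
    QW w * (2 : ℝ) ^ (Lam r1 r2 lam1 lam2 QW QX QY a.1 a.2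
      + lam1 * (r1 + Real.logb 2 (QX w a.1)) + lam2 * (r2 + Real.logb 2 (QY w a.2)))

/-- A Gray–Wyner code of blocklength `n` with message sets of sizes `M0`, `M1`, `M2`. -/
structure GWCode (𝒳 𝒴 : Type*) (n M0 M1 M2 : ℕ) where
  enc0 : (Fin n → 𝒳 × 𝒴) → Fin M0
  enc1 : (Fin n → 𝒳 × 𝒴) → Fin M1
  enc2 : (Fin n → 𝒳 × 𝒴) → Fin M2
  dec1 : Fin M0 × Fin M1 → Fin n → 𝒳
  dec2 : Fin M0 × Fin M2 → Fin n → 𝒴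

/-- Correct decoding of the source word `f`. -/
def GWCode.correct {𝒳 𝒴 : Type*} {n M0 M1 M2 : ℕ} (C : GWCode 𝒳 𝒴 n M0 M1 M2)
    (f : Fin n → 𝒳 × 𝒴) : Prop :=
  ∀ i, C.dec1 (C.enc0 f, C.enc1 f) i = (f i).1 ∧ C.dec2 (C.enc0 f, C.enc2 f) i = (f i).2

/-- Error probability of a code under the source distribution `P` on words. -/
def PeGW {n M0 M1 M2 : ℕ} (C : GWCode 𝒳 𝒴 n M0 M1 M2) (P : (Fin n → 𝒳 × 𝒴) → ℝ) : ℝ :=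
  ∑ f ∈ Finset.univ.filter (fun f => ¬ C.correct f), P f

/-- Correct probability of a code. -/
def PcGW {n M0 M1 M2 : ℕ} (C : GWCode 𝒳 𝒴 n M0 M1 M2) (P : (Fin n → 𝒳 × 𝒴) → ℝ) : ℝ :=
  1 - PeGW C P

/-- The i.i.d. (product) distribution on length-`n` source words. -/
def prodDist (p : 𝒳 × 𝒴 → ℝ) (n : ℕ) : (Fin n → 𝒳 × 𝒴) → ℝ := fun f => ∏ i, p (f i)

/-- First-order achievability of a rate triple for the Gray–Wyner network. -/
def GWAchievable (p : 𝒳 × 𝒴 → ℝ) (r0 r1 r2 : ℝ) : Prop :=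
  ∃ (M0 M1 M2 : ℕ → ℕ) (C : (n : ℕ) → GWCode 𝒳 𝒴 n (M0 n) (M1 n) (M2 n)),
    limsup (fun n : ℕ => Real.logb 2 (M0 n) / n) atTop ≤ r0 ∧
    limsup (fun n : ℕ => Real.logb 2 (M1 n) / n) atTop ≤ r1 ∧
    limsup (fun n : ℕ => Real.logb 2 (M2 n) / n) atTop ≤ r2 ∧
    Tendsto (fun n : ℕ => PeGW (C n) (prodDist p n)) atTop (nhds 0)

/-- Second-order `(ε, r0*, r1*, r2*)`-achievability of `(L0, L1, L2)`. -/
def GWSecondAchievable (p : 𝒳 × 𝒴 → ℝ) (ε r0 r1 r2 L0 L1 L2 : ℝ) : Prop :=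
  ∃ (M0 M1 M2 : ℕ → ℕ) (C : (n : ℕ) → GWCode 𝒳 𝒴 n (M0 n) (M1 n) (M2 n)),
    limsup (fun n : ℕ => (Real.logb 2 (M0 n) - n * r0) / Real.sqrt n) atTop ≤ L0 ∧
    limsup (fun n : ℕ => (Real.logb 2 (M1 n) - n * r1) / Real.sqrt n) atTop ≤ L1 ∧
    limsup (fun n : ℕ => (Real.logb 2 (M2 n) - n * r2) / Real.sqrt n) atTop ≤ L2 ∧
    limsup (fun n : ℕ => PeGW (C n) (prodDist p n)) atTop ≤ ε

/-- Empirical distribution (type) of a sequence. -/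
def empDist {α : Type*} [Fintype α] {n : ℕ} (f : Fin n → α) (a : α) : ℝ :=
  ((Finset.univ.filter fun i => f i = a).card : ℝ) / n

/-- `p` is a type of length-`n` sequences. -/
def IsJointType {α : Type*} [Fintype α] (n : ℕ) (p : α → ℝ) : Prop :=
  ∃ f : Fin n → α, ∀ a, p a = empDist f a

/-- `V` is a conditional type (of length `n`) given the joint type `p`. -/
def IsCondType (n : ℕ) (p : 𝒳 × 𝒴 → ℝ) (V : 𝒳 × 𝒴 → 𝒲 → ℝ) : Prop :=
  IsChannel V ∧ ∀ a, 0 < p a → ∀ w, ∃ c : ℕ, V a w = c / (n * p a)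

/-- The uniform distribution on the type class of the joint type `p`. -/
def unifType (n : ℕ) (p : 𝒳 × 𝒴 → ℝ) : (Fin n → 𝒳 × 𝒴) → ℝ :=
  fun f => if ∀ a, empDist f a = p a then
    (1 : ℝ) / ((Finset.univ.filter fun g : Fin n → 𝒳 × 𝒴 => ∀ a, empDist g a = p a).card : ℝ)
  else 0

/-- The single-letter Gray–Wyner region `ℛ*_GW(P_XY)`. -/
def RegionGW (p : 𝒳 × 𝒴 → ℝ) : Set (ℝ × ℝ × ℝ) :=
  { r | ∃ k, k ≤ Fintype.card 𝒳 * Fintype.card 𝒴 + 2 ∧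
      ∃ K : 𝒳 × 𝒴 → Fin k → ℝ, IsChannel K ∧
        mutInfoW p K ≤ r.1 ∧ condEntX p K ≤ r.2.1 ∧ condEntY p K ≤ r.2.2 }

/-- `X - W - Y` forms a Markov chain (conditional independence given `W`). -/
def MarkovXWY {k : ℕ} (p : 𝒳 × 𝒴 → ℝ) (K : 𝒳 × 𝒴 → Fin k → ℝ) : Prop :=
  ∀ w x y, jointW p K (w, (x, y)) * outW p K w = margWX p K (w, x) * margWY p K (w, y)

/-- The part of the region lying on the Pangloss plane `r0 + r1 + r2 = H(X,Y)`. -/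
def PanglossSet (p : 𝒳 × 𝒴 → ℝ) : Set (ℝ × ℝ × ℝ) :=
  { r | r ∈ RegionGW p ∧ r.1 + r.2.1 + r.2.2 = ent p }

/-- The distribution corresponding to the parameter `θ`, with respect to the
labelling `e` of the support: `P_θ(e i) = θ i` for `i < m`, and the last mass
is `1 - ∑ θ`. -/
def paramDist {α : Type*} {m : ℕ} (e : Fin (m + 1) → α) (θ : Fin m → ℝ) (a : α) : ℝ :=
  (∑ i : Fin m, if e i.castSucc = a then θ i else 0) +
    (if e (Fin.last m) = a then 1 - ∑ i, θ i else 0)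

/-- Variance of `g` under the distribution `p`. -/
def varOf {α : Type*} [Fintype α] (p : α → ℝ) (g : α → ℝ) : ℝ :=
  ∑ a, p a * (g a - ∑ b, p b * g b) ^ 2

/-- The Gaussian upper-tail probability `Q(t)`. -/
def Qfun (t : ℝ) : ℝ :=
  ∫ u in Set.Ioi t, (1 / Real.sqrt (2 * Real.pi)) * Real.exp (-(u ^ 2) / 2)

end

end GW

open GW


section Aux
open Real

lemma gibbs_nat {ι : Type*} [Fintype ι] (k c : ι → ℝ)
    (hk0 : ∀ i, 0 ≤ k i) (hk1 : ∑ i, k i = 1)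
    (hc0 : ∀ i, 0 ≤ c i) (hvan : ∀ i, c i = 0 → k i = 0) :
    - Real.log (∑ i, c i) ≤ ∑ i, k i * Real.log (k i / c i) := by
  set S := ∑ i, c i with hS
  have hS0 : 0 ≤ S := Finset.sum_nonneg (fun i _ => hc0 i)
  have hSpos : 0 < S := by
    rcases hS0.lt_or_eq with h | h
    · exact h
    · exfalso
      have hc : ∀ i ∈ Finset.univ, c i = 0 :=
        (Finset.sum_eq_zero_iff_of_nonneg (fun i _ => hc0 i)).mp h.symm
      have : (1:ℝ) = 0 := by
        rw [← hk1]
        exact Finset.sum_eq_zero (fun i _ => hvan i (hc i (Finset.mem_univ i)))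
      norm_num at this
  have key : ∀ i, k i - c i / S ≤ k i * Real.log (k i / c i) + k i * Real.log S := by
    intro i
    rcases (hk0 i).lt_or_eq with hki | hki
    · have hci : 0 < c i := by
        rcases (hc0 i).lt_or_eq with h | h
        · exact h
        · exfalso; rw [hvan i h.symm] at hki; exact hki.false
      have hkc : 0 < k i / c i := div_pos hki hci
      have e1 : k i * Real.log (k i / c i) + k i * Real.log S
          = k i * Real.log (k i / c i * S) := by
        rw [Real.log_mul hkc.ne' hSpos.ne', mul_add]
      set t : ℝ := c i / (S * k i) with ht
      have htpos : 0 < t := div_pos hci (mul_pos hSpos hki)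
      have hinv : k i / c i * S = t⁻¹ := by
        rw [ht]; field_simp
      have hlog : Real.log t ≤ t - 1 := Real.log_le_sub_one_of_pos htpos
      have e2 : Real.log (k i / c i * S) = - Real.log t := by rw [hinv, Real.log_inv]
      have : 1 - t ≤ Real.log (k i / c i * S) := by rw [e2]; linarith
      have := mul_le_mul_of_nonneg_left this hki.le
      have hkt : k i * t = c i / S := by rw [ht]; field_simp
      rw [e1]
      calc k i - c i / S = k i * (1 - t) := by rw [mul_sub, mul_one, hkt]
        _ ≤ k i * Real.log (k i / c i * S) := this
    · rw [← hki]
      have : 0 ≤ c i / S := div_nonneg (hc0 i) hS0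
      simp; linarith
  have hsum := Finset.sum_le_sum (fun i (_ : i ∈ Finset.univ) => key i)
  have e3 : ∑ i, (k i - c i / S) = 0 := by
    rw [Finset.sum_sub_distrib, hk1, ← Finset.sum_div, ← hS, div_self hSpos.ne']
    ring
  have e4 : ∑ i, (k i * Real.log (k i / c i) + k i * Real.log S)
      = (∑ i, k i * Real.log (k i / c i)) + Real.log S := by
    rw [Finset.sum_add_distrib, ← Finset.sum_mul, hk1, one_mul]
  rw [e3, e4] at hsum
  linarith

lemma gibbs {ι : Type*} [Fintype ι] (k c : ι → ℝ)
    (hk0 : ∀ i, 0 ≤ k i) (hk1 : ∑ i, k i = 1)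
    (hc0 : ∀ i, 0 ≤ c i) (hvan : ∀ i, c i = 0 → k i = 0) :
    - Real.logb 2 (∑ i, c i) ≤ ∑ i, k i * Real.logb 2 (k i / c i) := by
  have h := gibbs_nat k c hk0 hk1 hc0 hvan
  have hl2 : 0 < Real.log 2 := Real.log_pos (by norm_num)
  have : (∑ i, k i * Real.log (k i / c i)) / Real.log 2
      = ∑ i, k i * Real.logb 2 (k i / c i) := by
    rw [Finset.sum_div]
    exact Finset.sum_congr rfl (fun i _ => by rw [Real.logb, mul_div_assoc])
  rw [Real.logb, ← this]
  rw [← neg_div]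
  exact (div_le_div_iff_of_pos_right hl2).mpr h

lemma ent_nonneg {α : Type*} [Fintype α] {q : α → ℝ} (hq : IsProb q) : 0 ≤ ent q := by
  rw [ent, ← Finset.sum_neg_distrib]
  apply Finset.sum_nonneg
  intro a _
  rw [neg_nonneg]
  apply mul_nonpos_of_nonneg_of_nonpos (hq.1 a)
  apply Real.logb_nonpos (by norm_num) (hq.1 a)
  calc q a ≤ ∑ b, q b := Finset.single_le_sum (fun i _ => hq.1 i) (Finset.mem_univ a)
    _ = 1 := hq.2

end Aux

section Ids
variable {𝒳 𝒴 𝒲 : Type*} [Fintype 𝒳] [Fintype 𝒴] [Fintype 𝒲]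
variable {p : 𝒳 × 𝒴 → ℝ} {K : 𝒳 × 𝒴 → 𝒲 → ℝ}

lemma outW_nonneg (hp : IsProb p) (hK : IsChannel K) (w : 𝒲) : 0 ≤ outW p K w :=
  Finset.sum_nonneg fun a _ => mul_nonneg (hp.1 a) ((hK a).1 w)

lemma pK_le_outW (hp : IsProb p) (hK : IsChannel K) (a : 𝒳 × 𝒴) (w : 𝒲) :
    p a * K a w ≤ outW p K w :=
  Finset.single_le_sum (fun a' _ => mul_nonneg (hp.1 a') ((hK a').1 w)) (Finset.mem_univ a)

lemma outW_sum_one (hp : IsProb p) (hK : IsChannel K) : ∑ w, outW p K w = 1 := by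
  unfold outW
  rw [Finset.sum_comm]
  calc ∑ a, ∑ w, p a * K a w = ∑ a, p a := by
        refine Finset.sum_congr rfl fun a _ => ?_
        rw [← Finset.mul_sum, (hK a).2, mul_one]
    _ = 1 := hp.2

lemma margWX_nonneg (hp : IsProb p) (hK : IsChannel K) (w : 𝒲) (x : 𝒳) :
    0 ≤ margWX p K (w, x) :=
  Finset.sum_nonneg fun y _ => mul_nonneg (hp.1 _) ((hK _).1 w)

lemma margWY_nonneg (hp : IsProb p) (hK : IsChannel K) (w : 𝒲) (y : 𝒴) :
    0 ≤ margWY p K (w, y) :=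
  Finset.sum_nonneg fun x _ => mul_nonneg (hp.1 _) ((hK _).1 w)

lemma pK_le_margWX (hp : IsProb p) (hK : IsChannel K) (x : 𝒳) (y : 𝒴) (w : 𝒲) :
    p (x, y) * K (x, y) w ≤ margWX p K (w, x) :=
  Finset.single_le_sum (fun y' (_ : y' ∈ Finset.univ) =>
    mul_nonneg (hp.1 (x, y')) ((hK (x, y')).1 w)) (Finset.mem_univ y)

lemma pK_le_margWY (hp : IsProb p) (hK : IsChannel K) (x : 𝒳) (y : 𝒴) (w : 𝒲) :
    p (x, y) * K (x, y) w ≤ margWY p K (w, y) :=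
  Finset.single_le_sum (fun x' (_ : x' ∈ Finset.univ) =>
    mul_nonneg (hp.1 (x', y)) ((hK (x', y)).1 w)) (Finset.mem_univ x)

lemma margWX_sum (w : 𝒲) : ∑ x, margWX p K (w, x) = outW p K w := by
  unfold margWX outW
  rw [Fintype.sum_prod_type]

lemma margWY_sum (w : 𝒲) : ∑ y, margWY p K (w, y) = outW p K w := by
  unfold margWY outW
  rw [Fintype.sum_prod_type]
  exact Finset.sum_comm

lemma sumOut (hp : IsProb p) (hK : IsChannel K) (g : 𝒲 → ℝ) :
    ∑ a, ∑ w, p a * K a w * g w = ∑ w, outW p K w * g w := by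
  rw [Finset.sum_comm]
  refine Finset.sum_congr rfl fun w _ => ?_
  rw [← Finset.sum_mul]
  rfl

lemma sumSrc (hp : IsProb p) (hK : IsChannel K) (g : 𝒳 × 𝒴 → ℝ) :
    ∑ a, ∑ w, p a * K a w * g a = ∑ a, p a * g a := by
  refine Finset.sum_congr rfl fun a _ => ?_
  calc ∑ w, p a * K a w * g a
      = ∑ w, (p a * g a) * K a w := Finset.sum_congr rfl (fun w _ => by ring)
    _ = (p a * g a) * ∑ w, K a w := by rw [← Finset.mul_sum]
    _ = p a * g a := by rw [(hK a).2, mul_one]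

lemma sumJoint (g : 𝒲 → 𝒳 × 𝒴 → ℝ) :
    ∑ a, ∑ w, p a * K a w * g w a = ∑ z : 𝒲 × 𝒳 × 𝒴, jointW p K z * g z.1 z.2 := by
  conv_rhs => rw [Fintype.sum_prod_type]
  rw [Finset.sum_comm]
  rfl

lemma sumMX (g : 𝒲 → 𝒳 → ℝ) :
    ∑ a, ∑ w, p a * K a w * g w a.1 = ∑ w, ∑ x, margWX p K (w, x) * g w x := by
  rw [Fintype.sum_prod_type]
  dsimp only
  have h1 : ∀ x : 𝒳, (∑ y, ∑ w, p (x, y) * K (x, y) w * g w x)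
      = ∑ w, ∑ y, p (x, y) * K (x, y) w * g w x := fun x => Finset.sum_comm
  rw [Finset.sum_congr rfl (fun x _ => h1 x), Finset.sum_comm]
  refine Finset.sum_congr rfl fun w _ => Finset.sum_congr rfl fun x _ => ?_
  rw [← Finset.sum_mul]
  rfl

lemma sumMY (g : 𝒲 → 𝒴 → ℝ) :
    ∑ a, ∑ w, p a * K a w * g w a.2 = ∑ w, ∑ y, margWY p K (w, y) * g w y := by
  rw [Fintype.sum_prod_type]
  dsimp only
  rw [Finset.sum_comm]
  have h1 : ∀ y : 𝒴, (∑ x, ∑ w, p (x, y) * K (x, y) w * g w y)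
      = ∑ w, ∑ x, p (x, y) * K (x, y) w * g w y := fun y => Finset.sum_comm
  rw [Finset.sum_congr rfl (fun y _ => h1 y), Finset.sum_comm]
  refine Finset.sum_congr rfl fun w _ => Finset.sum_congr rfl fun y _ => ?_
  rw [← Finset.sum_mul]
  rfl

lemma idI (hp : IsProb p) (hK : IsChannel K) :
    mutInfoW p K = ∑ a, ∑ w, p a * K a w * Real.logb 2 (K a w / outW p K w) := by
  have main : ∀ a w, p a * K a w * Real.logb 2 (K a w / outW p K w)
      = p a * K a w * Real.logb 2 (p a * K a w)
        - p a * K a w * Real.logb 2 (p a) - p a * K a w * Real.logb 2 (outW p K w) := by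
    intro a w
    rcases eq_or_ne (p a * K a w) 0 with h | h
    · rw [h]; ring
    · have hpa : 0 < p a := ((hp.1 a).lt_or_eq.resolve_right (fun e => h (by rw [← e]; ring)))
      have hKa : 0 < K a w := (((hK a).1 w).lt_or_eq.resolve_right (fun e => h (by rw [← e]; ring)))
      have hout : 0 < outW p K w := lt_of_lt_of_le (mul_pos hpa hKa) (pK_le_outW hp hK a w)
      rw [Real.logb_div hKa.ne' hout.ne', Real.logb_mul hpa.ne' hKa.ne']
      ring
  have e1 : ∑ a, ∑ w, p a * K a w * Real.logb 2 (p a * K a w) = - ent (jointW p K) := by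
    rw [ent, neg_neg, sumJoint (p := p) (K := K) (fun w a => Real.logb 2 (p a * K a w))]
    rfl
  have e2 : ∑ a, ∑ w, p a * K a w * Real.logb 2 (p a) = - ent p := by
    rw [ent, neg_neg, sumSrc hp hK (fun a => Real.logb 2 (p a))]
  have e3 : ∑ a, ∑ w, p a * K a w * Real.logb 2 (outW p K w) = - ent (outW p K) := by
    rw [ent, neg_neg, sumOut hp hK (fun w => Real.logb 2 (outW p K w))]
  calc mutInfoW p K
      = (∑ a, ∑ w, p a * K a w * Real.logb 2 (p a * K a w))
        - (∑ a, ∑ w, p a * K a w * Real.logb 2 (p a))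
        - (∑ a, ∑ w, p a * K a w * Real.logb 2 (outW p K w)) := by
        rw [e1, e2, e3, mutInfoW]; ring
    _ = ∑ a, ∑ w, p a * K a w * Real.logb 2 (K a w / outW p K w) := by
        simp only [← Finset.sum_sub_distrib]
        exact Finset.sum_congr rfl fun a _ => Finset.sum_congr rfl fun w _ => (main a w).symm

lemma idX (hp : IsProb p) (hK : IsChannel K) :
    condEntX p K
      = ∑ a, ∑ w, p a * K a w * (- Real.logb 2 (margWX p K (w, a.1) / outW p K w)) := by
  have main : ∀ a w, p a * K a w * (- Real.logb 2 (margWX p K (w, a.1) / outW p K w))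
      = p a * K a w * Real.logb 2 (outW p K w)
        - p a * K a w * Real.logb 2 (margWX p K (w, a.1)) := by
    intro a w
    rcases eq_or_ne (p a * K a w) 0 with h | h
    · rw [h]; ring
    · have hpa : 0 < p a := ((hp.1 a).lt_or_eq.resolve_right (fun e => h (by rw [← e]; ring)))
      have hKa : 0 < K a w := (((hK a).1 w).lt_or_eq.resolve_right (fun e => h (by rw [← e]; ring)))
      have hm : 0 < margWX p K (w, a.1) :=
        lt_of_lt_of_le (mul_pos hpa hKa) (pK_le_margWX hp hK a.1 a.2 w)
      have hout : 0 < outW p K w := lt_of_lt_of_le (mul_pos hpa hKa) (pK_le_outW hp hK a w)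
      rw [Real.logb_div hm.ne' hout.ne']
      ring
  have e3 : ∑ a, ∑ w, p a * K a w * Real.logb 2 (outW p K w) = - ent (outW p K) := by
    rw [ent, neg_neg, sumOut hp hK (fun w => Real.logb 2 (outW p K w))]
  have e4 : ∑ a, ∑ w, p a * K a w * Real.logb 2 (margWX p K (w, a.1)) = - ent (margWX p K) := by
    rw [ent, neg_neg, sumMX (p := p) (K := K) (fun w x => Real.logb 2 (margWX p K (w, x)))]
    rw [Fintype.sum_prod_type]
  calc condEntX p K
      = (∑ a, ∑ w, p a * K a w * Real.logb 2 (outW p K w))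
        - (∑ a, ∑ w, p a * K a w * Real.logb 2 (margWX p K (w, a.1))) := by
        rw [e3, e4, condEntX]; ring
    _ = _ := by
        simp only [← Finset.sum_sub_distrib]
        exact Finset.sum_congr rfl fun a _ => Finset.sum_congr rfl fun w _ => (main a w).symm

lemma idY (hp : IsProb p) (hK : IsChannel K) :
    condEntY p K
      = ∑ a, ∑ w, p a * K a w * (- Real.logb 2 (margWY p K (w, a.2) / outW p K w)) := by
  have main : ∀ a w, p a * K a w * (- Real.logb 2 (margWY p K (w, a.2) / outW p K w))
      = p a * K a w * Real.logb 2 (outW p K w)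
        - p a * K a w * Real.logb 2 (margWY p K (w, a.2)) := by
    intro a w
    rcases eq_or_ne (p a * K a w) 0 with h | h
    · rw [h]; ring
    · have hpa : 0 < p a := ((hp.1 a).lt_or_eq.resolve_right (fun e => h (by rw [← e]; ring)))
      have hKa : 0 < K a w := (((hK a).1 w).lt_or_eq.resolve_right (fun e => h (by rw [← e]; ring)))
      have hm : 0 < margWY p K (w, a.2) :=
        lt_of_lt_of_le (mul_pos hpa hKa) (pK_le_margWY hp hK a.1 a.2 w)
      have hout : 0 < outW p K w := lt_of_lt_of_le (mul_pos hpa hKa) (pK_le_outW hp hK a w)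
      rw [Real.logb_div hm.ne' hout.ne']
      ring
  have e3 : ∑ a, ∑ w, p a * K a w * Real.logb 2 (outW p K w) = - ent (outW p K) := by
    rw [ent, neg_neg, sumOut hp hK (fun w => Real.logb 2 (outW p K w))]
  have e4 : ∑ a, ∑ w, p a * K a w * Real.logb 2 (margWY p K (w, a.2)) = - ent (margWY p K) := by
    rw [ent, neg_neg, sumMY (p := p) (K := K) (fun w y => Real.logb 2 (margWY p K (w, y)))]
    rw [Fintype.sum_prod_type]
  calc condEntY p K
      = (∑ a, ∑ w, p a * K a w * Real.logb 2 (outW p K w))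
        - (∑ a, ∑ w, p a * K a w * Real.logb 2 (margWY p K (w, a.2))) := by
        rw [e3, e4, condEntY]; ring
    _ = _ := by
        simp only [← Finset.sum_sub_distrib]
        exact Finset.sum_congr rfl fun a _ => Finset.sum_congr rfl fun w _ => (main a w).symm

end Ids

section Decomp
variable {𝒳 𝒴 𝒲 : Type*} [Fintype 𝒳] [Fintype 𝒴] [Fintype 𝒲]

noncomputable def entX (q : 𝒳 × 𝒴 → ℝ) : ℝ := ent (fun x => ∑ y, q (x, y))
noncomputable def entY (q : 𝒳 × 𝒴 → ℝ) : ℝ := ent (fun y => ∑ x, q (x, y))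

variable {p : 𝒳 × 𝒴 → ℝ} {K : 𝒳 × 𝒴 → 𝒲 → ℝ} {μ : 𝒲 → ℝ} {q : 𝒲 → 𝒳 × 𝒴 → ℝ}

lemma decomp_outW (hq : ∀ w, IsProb (q w)) (heq : ∀ a w, p a * K a w = μ w * q w a)
    (w : 𝒲) : outW p K w = μ w := by
  unfold outW
  rw [Finset.sum_congr rfl (fun a _ => heq a w), ← Finset.mul_sum, (hq w).2, mul_one]

lemma decomp_hsum (hK : IsChannel K) (heq : ∀ a w, p a * K a w = μ w * q w a)
    (a : 𝒳 × 𝒴) : ∑ w, μ w * q w a = p a := by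
  rw [← Finset.sum_congr rfl (fun w _ => heq a w), ← Finset.mul_sum, (hK a).2, mul_one]

lemma decomp_margWX (heq : ∀ a w, p a * K a w = μ w * q w a) (w : 𝒲) (x : 𝒳) :
    margWX p K (w, x) = μ w * ∑ y, q w (x, y) := by
  unfold margWX
  rw [Finset.mul_sum]
  exact Finset.sum_congr rfl fun y _ => heq (x, y) w

lemma decomp_margWY (heq : ∀ a w, p a * K a w = μ w * q w a) (w : 𝒲) (y : 𝒴) :
    margWY p K (w, y) = μ w * ∑ x, q w (x, y) := by
  unfold margWY
  rw [Finset.mul_sum]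
  exact Finset.sum_congr rfl fun x _ => heq (x, y) w

lemma decomp_mutInfo (hp : IsProb p) (hK : IsChannel K) (hμ : ∀ w, 0 ≤ μ w)
    (hq : ∀ w, IsProb (q w)) (heq : ∀ a w, p a * K a w = μ w * q w a) :
    mutInfoW p K = ent p - ∑ w, μ w * ent (q w) := by
  rw [idI hp hK]
  have per : ∀ a w, p a * K a w * Real.logb 2 (K a w / outW p K w)
      = μ w * q w a * Real.logb 2 (q w a) - μ w * q w a * Real.logb 2 (p a) := by
    intro a w
    rcases eq_or_ne (μ w * q w a) 0 with h | h
    · rw [heq a w, h]; ring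
    · have hμw : 0 < μ w := (hμ w).lt_or_eq.resolve_right (fun e => h (by rw [← e]; ring))
      have hqa : 0 < q w a := ((hq w).1 a).lt_or_eq.resolve_right (fun e => h (by rw [← e]; ring))
      have hpK : 0 < p a * K a w := by rw [heq a w]; exact mul_pos hμw hqa
      have hpa : 0 < p a := by
        rcases (hp.1 a).lt_or_eq with h' | h'
        · exact h'
        · exfalso; rw [← h', zero_mul] at hpK; exact hpK.false
      have hKa : 0 < K a w := by
        rcases ((hK a).1 w).lt_or_eq with h' | h'
        · exact h'
        · exfalso; rw [← h', mul_zero] at hpK; exact hpK.false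
      rw [decomp_outW hq heq w]
      have hdiv : K a w / μ w = q w a / p a := by
        field_simp
        rw [mul_comm (K a w) (p a), heq a w]
      rw [hdiv, Real.logb_div hqa.ne' hpa.ne', heq a w]
      ring
  rw [Finset.sum_congr rfl (fun a (_ : a ∈ Finset.univ) =>
    Finset.sum_congr rfl (fun w _ => per a w))]
  simp only [Finset.sum_sub_distrib]
  have eA : ∑ a, ∑ w, μ w * q w a * Real.logb 2 (q w a) = ∑ w, μ w * (- ent (q w)) := by
    rw [Finset.sum_comm]
    refine Finset.sum_congr rfl fun w _ => ?_
    rw [ent, neg_neg, Finset.mul_sum]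
    exact Finset.sum_congr rfl fun a _ => by ring
  have eB : ∑ a, ∑ w, μ w * q w a * Real.logb 2 (p a) = - ent p := by
    rw [ent, neg_neg]
    refine Finset.sum_congr rfl fun a _ => ?_
    rw [← Finset.sum_mul, decomp_hsum hK heq a]
  rw [eA, eB]
  have : ∑ w, μ w * (- ent (q w)) = - ∑ w, μ w * ent (q w) := by
    rw [← Finset.sum_neg_distrib]
    exact Finset.sum_congr rfl fun w _ => by ring
  rw [this]; ring

lemma decomp_condEntX (hp : IsProb p) (hK : IsChannel K) (hμ : ∀ w, 0 ≤ μ w)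
    (hq : ∀ w, IsProb (q w)) (heq : ∀ a w, p a * K a w = μ w * q w a) :
    condEntX p K = ∑ w, μ w * entX (q w) := by
  rw [idX hp hK]
  have per : ∀ a w, p a * K a w * (- Real.logb 2 (margWX p K (w, a.1) / outW p K w))
      = μ w * (q w a * (- Real.logb 2 (∑ y, q w (a.1, y)))) := by
    intro a w
    rcases eq_or_ne (μ w * q w a) 0 with h | h
    · rw [heq a w]
      rcases mul_eq_zero.mp h with h' | h'
      · rw [h']; ring
      · rw [h']; ring
    · have hμw : 0 < μ w := (hμ w).lt_or_eq.resolve_right (fun e => h (by rw [← e]; ring))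
      have hqa : 0 < q w a := ((hq w).1 a).lt_or_eq.resolve_right (fun e => h (by rw [← e]; ring))
      rw [decomp_outW hq heq w, decomp_margWX heq w a.1]
      rw [mul_div_cancel_left₀ _ hμw.ne', heq a w]
      ring
  rw [Finset.sum_congr rfl (fun a (_ : a ∈ Finset.univ) =>
    Finset.sum_congr rfl (fun w _ => per a w))]
  rw [Finset.sum_comm]
  refine Finset.sum_congr rfl fun w _ => ?_
  rw [← Finset.mul_sum]
  congr 1
  rw [entX, ent, ← Finset.sum_neg_distrib, Fintype.sum_prod_type]
  refine Finset.sum_congr rfl fun x _ => ?_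
  dsimp only
  rw [← Finset.sum_mul]
  ring

lemma decomp_condEntY (hp : IsProb p) (hK : IsChannel K) (hμ : ∀ w, 0 ≤ μ w)
    (hq : ∀ w, IsProb (q w)) (heq : ∀ a w, p a * K a w = μ w * q w a) :
    condEntY p K = ∑ w, μ w * entY (q w) := by
  rw [idY hp hK]
  have per : ∀ a w, p a * K a w * (- Real.logb 2 (margWY p K (w, a.2) / outW p K w))
      = μ w * (q w a * (- Real.logb 2 (∑ x, q w (x, a.2)))) := by
    intro a w
    rcases eq_or_ne (μ w * q w a) 0 with h | h
    · rw [heq a w]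
      rcases mul_eq_zero.mp h with h' | h'
      · rw [h']; ring
      · rw [h']; ring
    · have hμw : 0 < μ w := (hμ w).lt_or_eq.resolve_right (fun e => h (by rw [← e]; ring))
      have hqa : 0 < q w a := ((hq w).1 a).lt_or_eq.resolve_right (fun e => h (by rw [← e]; ring))
      rw [decomp_outW hq heq w, decomp_margWY heq w a.2]
      rw [mul_div_cancel_left₀ _ hμw.ne', heq a w]
      ring
  rw [Finset.sum_congr rfl (fun a (_ : a ∈ Finset.univ) =>
    Finset.sum_congr rfl (fun w _ => per a w))]
  rw [Finset.sum_comm]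
  refine Finset.sum_congr rfl fun w _ => ?_
  rw [← Finset.mul_sum]
  congr 1
  rw [entY, ent, ← Finset.sum_neg_distrib, Fintype.sum_prod_type, Finset.sum_comm]
  refine Finset.sum_congr rfl fun y _ => ?_
  dsimp only
  rw [← Finset.sum_mul]
  ring

lemma chan_to_decomp (hp : IsProb p) (hK : IsChannel K) :
    ∃ q : 𝒲 → 𝒳 × 𝒴 → ℝ, (∀ w, IsProb (q w)) ∧
      (∀ a w, p a * K a w = outW p K w * q w a) := by
  refine ⟨fun w => if outW p K w = 0 then p else fun a => p a * K a w / outW p K w, ?_, ?_⟩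
  · intro w
    by_cases h : outW p K w = 0
    · simpa [h] using hp
    · have hpos : 0 < outW p K w := (outW_nonneg hp hK w).lt_or_eq.resolve_right (Ne.symm h)
      constructor
      · intro a
        simp only [h, if_false]
        exact div_nonneg (mul_nonneg (hp.1 a) ((hK a).1 w)) hpos.le
      · simp only [h, if_false]
        rw [← Finset.sum_div]
        have e : (∑ a, p a * K a w) = outW p K w := rfl
        rw [e, div_self h]
  · intro a w
    by_cases h : outW p K w = 0
    · have h1 : p a * K a w ≤ 0 := h ▸ pK_le_outW hp hK a w
      have h2 : 0 ≤ p a * K a w := mul_nonneg (hp.1 a) ((hK a).1 w)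
      simp [h, le_antisymm h1 h2]
    · simp only [h, if_false]
      rw [mul_comm (outW p K w) _, div_mul_cancel₀ _ h]

lemma decomp_to_chan (hp : IsProb p) (hμ : ∀ w, 0 ≤ μ w) (hq : ∀ w, IsProb (q w))
    (hsum : ∀ a, ∑ w, μ w * q w a = p a) :
    ∃ K : 𝒳 × 𝒴 → 𝒲 → ℝ, IsChannel K ∧ (∀ a w, p a * K a w = μ w * q w a) := by
  have hμ1 : ∑ w, μ w = 1 := by
    have : ∑ w, μ w = ∑ w, ∑ a, μ w * q w a := by
      refine Finset.sum_congr rfl fun w _ => ?_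
      rw [← Finset.mul_sum, (hq w).2, mul_one]
    rw [this, Finset.sum_comm, Finset.sum_congr rfl (fun a (_ : a ∈ Finset.univ) => hsum a), hp.2]
  refine ⟨fun a w => if p a = 0 then μ w else μ w * q w a / p a, ?_, ?_⟩
  · intro a
    by_cases h : p a = 0
    · exact ⟨fun w => by simp [h]; exact hμ w, by simp [h, hμ1]⟩
    · have hpa : 0 < p a := (hp.1 a).lt_or_eq.resolve_right (Ne.symm h)
      constructor
      · intro w
        simp only [h, if_false]
        exact div_nonneg (mul_nonneg (hμ w) ((hq w).1 a)) hpa.le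
      · simp only [h, if_false]
        rw [← Finset.sum_div, hsum a, div_self h]
  · intro a w
    by_cases h : p a = 0
    · have h2 : μ w * q w a = 0 := by
        have hle : μ w * q w a ≤ ∑ w', μ w' * q w' a :=
          Finset.single_le_sum (fun w' _ => mul_nonneg (hμ w') ((hq w').1 a)) (Finset.mem_univ w)
        have := hsum a
        rw [h] at this
        exact le_antisymm (this ▸ hle) (mul_nonneg (hμ w) ((hq w).1 a))
      simp [h, h2]
    · simp only [h, if_false]
      rw [mul_comm (p a) _, div_mul_cancel₀ _ h]

end Decomp

section Reduce
variable {𝒳 𝒴 : Type*} [Fintype 𝒳] [Fintype 𝒴]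

lemma reduction {ι : Type*} [Fintype ι] (p : 𝒳 × 𝒴 → ℝ) (q : ι → 𝒳 × 𝒴 → ℝ)
    (hq : ∀ w, IsProb (q w)) :
    ∀ (n : ℕ) (μ : ι → ℝ), (∀ w, 0 ≤ μ w) → (∀ a, ∑ w, μ w * q w a = p a) →
      (Finset.univ.filter (fun w => μ w ≠ 0)).card = n →
    ∃ μ' : ι → ℝ, (∀ w, 0 ≤ μ' w) ∧ (∀ a, ∑ w, μ' w * q w a = p a) ∧
      (Finset.univ.filter (fun w => μ' w ≠ 0)).card ≤ Fintype.card 𝒳 * Fintype.card 𝒴 + 2 ∧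
      (∑ w, μ' w * entX (q w)) ≤ ∑ w, μ w * entX (q w) ∧
      (∑ w, μ' w * entY (q w)) ≤ ∑ w, μ w * entY (q w) ∧
      (∑ w, μ w * ent (q w)) ≤ ∑ w, μ' w * ent (q w) := by
  intro n
  induction n using Nat.strong_induction_on with
  | _ n ih =>
    intro μ hμ hsum hn
    by_cases hle : (Finset.univ.filter (fun w => μ w ≠ 0)).card
        ≤ Fintype.card 𝒳 * Fintype.card 𝒴 + 2
    · exact ⟨μ, hμ, hsum, hle, le_refl _, le_refl _, le_refl _⟩
    · set t := Finset.univ.filter (fun w => μ w ≠ 0) with ht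
      have hμt : ∀ w ∈ t, 0 < μ w := by
        intro w hw
        have : μ w ≠ 0 := (Finset.mem_filter.mp hw).2
        exact (hμ w).lt_or_eq.resolve_right (Ne.symm this)
      have hμnt : ∀ w, w ∉ t → μ w = 0 := by
        intro w hw
        by_contra h
        exact hw (Finset.mem_filter.mpr ⟨Finset.mem_univ w, h⟩)
      have hcard : Fintype.card 𝒳 * Fintype.card 𝒴 + 2 < t.card := not_le.mp hle
      set v : ι → ((𝒳 × 𝒴) ⊕ Fin 2) → ℝ :=
        fun w => Sum.elim (q w) (fun j => if j = 0 then entX (q w) else entY (q w)) with hv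
      have hdep : ¬ LinearIndependent ℝ (fun i : ↥t => v ↑i) := by
        intro hli
        have h2 := hli.fintype_card_le_finrank
        rw [Fintype.card_coe, Module.finrank_pi ℝ, Fintype.card_sum, Fintype.card_prod,
          Fintype.card_fin] at h2
        omega
      obtain ⟨g, hg0, i0, hgi⟩ := Fintype.not_linearIndependent_iff.mp hdep
      set d : ι → ℝ := fun w => if h : w ∈ t then g ⟨w, h⟩ else 0 with hd
      have hdt : ∀ w, w ∉ t → d w = 0 := fun w hw => dif_neg hw
      have hvecsum : ∑ w ∈ t, d w • v w = 0 := by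
        rw [← Finset.sum_coe_sort t (fun w => d w • v w), ← hg0]
        refine Finset.sum_congr rfl fun i _ => ?_
        congr 1
        rw [hd]
        simp [i.2]
      have huniv : ∑ w, d w • v w = 0 := by
        rw [← Finset.sum_subset t.subset_univ
          (fun w _ hw => by rw [hdt w hw, zero_smul])]
        exact hvecsum
      have hcomp : ∀ j, ∑ w, d w * v w j = 0 := by
        intro j
        have h3 := congrFun huniv j
        rw [Finset.sum_apply] at h3
        simpa using h3
      have hq0 : ∀ a, ∑ w, d w * q w a = 0 := fun a => hcomp (Sum.inl a)
      have hX0 : ∑ w, d w * entX (q w) = 0 := by simpa [hv] using hcomp (Sum.inr 0)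
      have hY0 : ∑ w, d w * entY (q w) = 0 := by
        have h4 := hcomp (Sum.inr 1)
        simpa [hv] using h4
      have hdsum : ∑ w, d w = 0 := by
        have h5 : ∑ a, ∑ w, d w * q w a = 0 := by
          rw [Finset.sum_congr rfl (fun a (_ : a ∈ Finset.univ) => hq0 a)]
          simp
        rw [Finset.sum_comm] at h5
        calc ∑ w, d w = ∑ w, ∑ a, d w * q w a := by
              refine Finset.sum_congr rfl fun w _ => ?_
              rw [← Finset.mul_sum, (hq w).2, mul_one]
          _ = 0 := h5
      have hdi0 : d ↑i0 ≠ 0 := by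
        rw [hd]
        simpa [i0.2] using hgi
      obtain ⟨e, het, heq0, heX, heY, hesum, heent, hene⟩ :
          ∃ e : ι → ℝ, (∀ w, w ∉ t → e w = 0) ∧ (∀ a, ∑ w, e w * q w a = 0) ∧
            (∑ w, e w * entX (q w) = 0) ∧ (∑ w, e w * entY (q w) = 0) ∧ (∑ w, e w = 0) ∧
            (0 ≤ ∑ w, e w * ent (q w)) ∧ e ↑i0 ≠ 0 := by
        rcases le_or_gt 0 (∑ w, d w * ent (q w)) with h | h
        · exact ⟨d, hdt, hq0, hX0, hY0, hdsum, h, hdi0⟩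
        · refine ⟨fun w => - d w, fun w hw => by dsimp; rw [hdt w hw, neg_zero], fun a => ?_, ?_, ?_, ?_, ?_, ?_⟩
          · simp only [neg_mul, Finset.sum_neg_distrib, hq0 a, neg_zero]
          · simp only [neg_mul, Finset.sum_neg_distrib, hX0, neg_zero]
          · simp only [neg_mul, Finset.sum_neg_distrib, hY0, neg_zero]
          · simp only [Finset.sum_neg_distrib, hdsum, neg_zero]
          · simp only [neg_mul, Finset.sum_neg_distrib]
            linarith
          · simpa using hdi0
      have hneg : ∃ w ∈ t, e w < 0 := by
        by_contra hno
        push_neg at hno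
        have hall : ∀ w ∈ Finset.univ, 0 ≤ e w := by
          intro w _
          by_cases hw : w ∈ t
          · exact hno w hw
          · rw [het w hw]
        have hzero := (Finset.sum_eq_zero_iff_of_nonneg hall).mp hesum
        exact hene (hzero ↑i0 (Finset.mem_univ _))
      set s := t.filter (fun w => e w < 0) with hs
      have hsne : s.Nonempty := by
        obtain ⟨w, hw, hew⟩ := hneg
        exact ⟨w, Finset.mem_filter.mpr ⟨hw, hew⟩⟩
      set τ := s.inf' hsne (fun w => μ w / (- e w)) with hτ
      have hτpos : 0 < τ := by
        rw [hτ, Finset.lt_inf'_iff]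
        intro w hw
        have hwt := (Finset.mem_filter.mp hw).1
        have hew := (Finset.mem_filter.mp hw).2
        exact div_pos (hμt w hwt) (by linarith)
      obtain ⟨wm, hwm, hwmeq⟩ := Finset.exists_mem_eq_inf' hsne (fun w => μ w / (- e w))
      set μ' : ι → ℝ := fun w => μ w + τ * e w with hμ'
      have hμ'0 : ∀ w, 0 ≤ μ' w := by
        intro w
        rcases le_or_gt 0 (e w) with h | h
        · have : 0 ≤ τ * e w := mul_nonneg hτpos.le h
          rw [hμ']; dsimp; linarith [hμ w]
        · have hwt : w ∈ t := by
            by_contra hw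
            rw [het w hw] at h
            exact h.false
          have hws : w ∈ s := Finset.mem_filter.mpr ⟨hwt, h⟩
          have hle2 : τ ≤ μ w / (- e w) := Finset.inf'_le _ hws
          have : τ * (- e w) ≤ μ w := by
            rw [← le_div_iff₀ (by linarith : (0:ℝ) < - e w)]
            exact hle2
          rw [hμ']; dsimp; linarith
      have hsum' : ∀ a, ∑ w, μ' w * q w a = p a := by
        intro a
        have : ∑ w, μ' w * q w a = ∑ w, (μ w * q w a + τ * (e w * q w a)) := by
          refine Finset.sum_congr rfl fun w _ => ?_
          rw [hμ']; ring
        rw [this, Finset.sum_add_distrib, ← Finset.mul_sum, heq0 a, hsum a, mul_zero, add_zero]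
      have hμ'wm : μ' wm = 0 := by
        have hewm : e wm < 0 := (Finset.mem_filter.mp hwm).2
        have hne : e wm ≠ 0 := ne_of_lt hewm
        have : τ * e wm = - μ wm := by
          rw [hτ, hwmeq, div_mul_eq_mul_div, div_neg, mul_div_assoc, div_self hne, mul_one]
        rw [hμ']; dsimp; rw [this]; ring
      have hsupp : (Finset.univ.filter (fun w => μ' w ≠ 0)) ⊆ t.erase wm := by
        intro w hw
        have hwne : μ' w ≠ 0 := (Finset.mem_filter.mp hw).2
        have hwt : w ∈ t := by
          by_contra hwnt
          apply hwne
          rw [hμ']; dsimp; rw [hμnt w hwnt, het w hwnt]; ring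
        refine Finset.mem_erase.mpr ⟨?_, hwt⟩
        intro hcon
        rw [hcon] at hwne
        exact hwne hμ'wm
      have hcard' : (Finset.univ.filter (fun w => μ' w ≠ 0)).card < n := by
        calc (Finset.univ.filter (fun w => μ' w ≠ 0)).card
            ≤ (t.erase wm).card := Finset.card_le_card hsupp
          _ < t.card := Finset.card_erase_lt_of_mem (Finset.mem_filter.mp hwm).1
          _ = n := hn
      have hsplit : ∀ f : ι → ℝ, ∑ w, μ' w * f w = (∑ w, μ w * f w) + τ * ∑ w, e w * f w := by
        intro f
        rw [Finset.mul_sum, ← Finset.sum_add_distrib]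
        refine Finset.sum_congr rfl fun w _ => ?_
        rw [hμ']; ring
      obtain ⟨μ'', h1, h2, h3, h4, h5, h6⟩ :=
        ih _ hcard' μ' hμ'0 hsum' rfl
      refine ⟨μ'', h1, h2, h3, ?_, ?_, ?_⟩
      · calc ∑ w, μ'' w * entX (q w) ≤ ∑ w, μ' w * entX (q w) := h4
          _ = ∑ w, μ w * entX (q w) := by rw [hsplit, heX, mul_zero, add_zero]
      · calc ∑ w, μ'' w * entY (q w) ≤ ∑ w, μ' w * entY (q w) := h5
          _ = ∑ w, μ w * entY (q w) := by rw [hsplit, heY, mul_zero, add_zero]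
      · calc ∑ w, μ w * ent (q w)
            ≤ ∑ w, μ' w * ent (q w) := by
              rw [hsplit]
              have : 0 ≤ τ * ∑ w, e w * ent (q w) := mul_nonneg hτpos.le heent
              linarith
          _ ≤ ∑ w, μ'' w * ent (q w) := h6

end Reduce

section RgwFacts
variable {𝒳 𝒴 : Type*} [Fintype 𝒳] [Fintype 𝒴] {p : 𝒳 × 𝒴 → ℝ}

lemma entX_nonneg {q : 𝒳 × 𝒴 → ℝ} (hq : IsProb q) : 0 ≤ entX q := by
  apply ent_nonneg
  constructor
  · intro x
    exact Finset.sum_nonneg fun y _ => hq.1 (x, y)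
  · rw [← Fintype.sum_prod_type]
    exact hq.2

lemma entY_nonneg {q : 𝒳 × 𝒴 → ℝ} (hq : IsProb q) : 0 ≤ entY q := by
  apply ent_nonneg
  constructor
  · intro y
    exact Finset.sum_nonneg fun x _ => hq.1 (x, y)
  · rw [← Fintype.sum_prod_type_right]
    exact hq.2

lemma mutInfo_nonneg {𝒲 : Type*} [Fintype 𝒲] {K : 𝒳 × 𝒴 → 𝒲 → ℝ}
    (hp : IsProb p) (hK : IsChannel K) : 0 ≤ mutInfoW p K := by
  rw [idI hp hK]
  apply Finset.sum_nonneg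
  intro a _
  rcases (hp.1 a).lt_or_eq with hpa | hpa
  · have hvan : ∀ w, outW p K w = 0 → K a w = 0 := by
      intro w hw
      have h1 : p a * K a w ≤ 0 := hw ▸ pK_le_outW hp hK a w
      have h2 : 0 ≤ p a * K a w := mul_nonneg hpa.le ((hK a).1 w)
      have := le_antisymm h1 h2
      exact (mul_eq_zero.mp this).resolve_left hpa.ne'
    have hg := gibbs (K a) (outW p K) (hK a).1 (hK a).2 (outW_nonneg hp hK) hvan
    rw [outW_sum_one hp hK, Real.logb_one, neg_zero] at hg
    have : ∑ w, p a * K a w * Real.logb 2 (K a w / outW p K w)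
        = p a * ∑ w, K a w * Real.logb 2 (K a w / outW p K w) := by
      rw [Finset.mul_sum]
      exact Finset.sum_congr rfl fun w _ => by ring
    rw [this]
    exact mul_nonneg hpa.le hg
  · rw [← hpa]
    apply Finset.sum_nonneg
    intro w _
    simp

lemma ent_dirac {α : Type*} [Fintype α] (b : α) :
    ent (fun x => if x = b then (1:ℝ) else 0) = 0 := by
  rw [ent, Finset.sum_eq_single b (fun x _ hx => by simp [hx]) (by simp)]
  simp

/-- The defining set of `Rgw`. -/
def RS (p : 𝒳 × 𝒴 → ℝ) (r1 r2 : ℝ) : Set ℝ :=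
  { ρ : ℝ | ∃ k, k ≤ Fintype.card 𝒳 * Fintype.card 𝒴 + 2 ∧
    ∃ K : 𝒳 × 𝒴 → Fin k → ℝ, IsChannel K ∧
      condEntX p K ≤ r1 ∧ condEntY p K ≤ r2 ∧ ρ = mutInfoW p K }

lemma Rgw_eq (r1 r2 : ℝ) : Rgw p r1 r2 = sInf (RS p r1 r2) := rfl

lemma RS_bddBelow (hp : IsProb p) (r1 r2 : ℝ) : BddBelow (RS p r1 r2) := by
  refine ⟨0, fun ρ hρ => ?_⟩
  obtain ⟨k, _, K, hK, _, _, hρ⟩ := hρ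
  rw [hρ]
  exact mutInfo_nonneg hp hK

lemma sum_dirac_fst (b : 𝒳 × 𝒴) (x : 𝒳) :
    ∑ y, (if (x, y) = b then (1:ℝ) else 0) = if x = b.1 then 1 else 0 := by
  obtain ⟨b1, b2⟩ := b
  rcases eq_or_ne x b1 with h | h
  · subst h
    rw [if_pos rfl, Finset.sum_eq_single b2 (fun y _ hy => if_neg (by simp [hy])) (by simp)]
    simp
  · rw [if_neg h, Finset.sum_eq_zero]
    intro y _
    exact if_neg (by simp [Prod.ext_iff, h])

lemma sum_dirac_snd (b : 𝒳 × 𝒴) (y : 𝒴) :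
    ∑ x, (if (x, y) = b then (1:ℝ) else 0) = if y = b.2 then 1 else 0 := by
  obtain ⟨b1, b2⟩ := b
  rcases eq_or_ne y b2 with h | h
  · subst h
    rw [if_pos rfl, Finset.sum_eq_single b1 (fun x _ hx => if_neg (by simp [hx])) (by simp)]
    simp
  · rw [if_neg h, Finset.sum_eq_zero]
    intro x _
    exact if_neg (by simp [Prod.ext_iff, h])

lemma RS_nonempty (hp : IsProb p) {r1 r2 : ℝ} (hr1 : 0 ≤ r1) (hr2 : 0 ≤ r2) :
    (RS p r1 r2).Nonempty := by
  classical
  set m := Fintype.card (𝒳 × 𝒴) with hm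
  obtain e := Fintype.equivFin (𝒳 × 𝒴)
  set K : 𝒳 × 𝒴 → Fin m → ℝ := fun a w => if w = e a then 1 else 0 with hKdef
  have hK : IsChannel K := by
    intro a
    constructor
    · intro w; dsimp [K]; split <;> norm_num
    · simp [K]
  set μ : Fin m → ℝ := fun w => p (e.symm w) with hμdef
  set q : Fin m → 𝒳 × 𝒴 → ℝ := fun w a => if a = e.symm w then 1 else 0 with hqdef
  have hq : ∀ w, IsProb (q w) := by
    intro w
    constructor
    · intro a; dsimp [q]; split <;> norm_num
    · simp [q]
  have hμ : ∀ w, 0 ≤ μ w := fun w => hp.1 _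
  have heq : ∀ a w, p a * K a w = μ w * q w a := by
    intro a w
    dsimp [K, μ, q]
    by_cases h : w = e a
    · subst h
      simp
    · have h' : ¬ a = e.symm w := by
        intro h'
        apply h
        rw [h']
        simp
      simp [h, h']
  refine ⟨mutInfoW p K, m, ?_, K, hK, ?_, ?_, rfl⟩
  · rw [hm, Fintype.card_prod]
    omega
  · rw [decomp_condEntX hp hK hμ hq heq]
    have hqx : ∀ w, entX (q w) = 0 := by
      intro w
      rw [entX]
      have he : (fun x => ∑ y, q w (x, y)) = fun x => if x = (e.symm w).1 then (1:ℝ) else 0 := by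
        funext x
        exact sum_dirac_fst (e.symm w) x
      rw [he, ent_dirac]
    rw [Finset.sum_congr rfl (fun w (_ : w ∈ Finset.univ) => by rw [hqx w, mul_zero])]
    simpa using hr1
  · rw [decomp_condEntY hp hK hμ hq heq]
    have hqy : ∀ w, entY (q w) = 0 := by
      intro w
      rw [entY]
      have he : (fun y => ∑ x, q w (x, y)) = fun y => if y = (e.symm w).2 then (1:ℝ) else 0 := by
        funext y
        exact sum_dirac_snd (e.symm w) y
      rw [he, ent_dirac]
    rw [Finset.sum_congr rfl (fun w (_ : w ∈ Finset.univ) => by rw [hqy w, mul_zero])]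
    simpa using hr2

lemma Rgw_le (hp : IsProb p) {r1 r2 : ℝ} {k : ℕ}
    (hk : k ≤ Fintype.card 𝒳 * Fintype.card 𝒴 + 2) {K : 𝒳 × 𝒴 → Fin k → ℝ}
    (hK : IsChannel K) (h1 : condEntX p K ≤ r1) (h2 : condEntY p K ≤ r2) :
    Rgw p r1 r2 ≤ mutInfoW p K := by
  rw [Rgw_eq]
  exact csInf_le (RS_bddBelow hp r1 r2) ⟨k, hk, K, hK, h1, h2, rfl⟩

lemma Rgw_anti (hp : IsProb p) {r1 r2 r1' r2' : ℝ} (h1 : 0 ≤ r1) (h2 : 0 ≤ r2)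
    (h1' : r1 ≤ r1') (h2' : r2 ≤ r2') : Rgw p r1' r2' ≤ Rgw p r1 r2 := by
  rw [Rgw_eq, Rgw_eq]
  apply csInf_le_csInf (RS_bddBelow hp r1' r2') (RS_nonempty hp h1 h2)
  rintro ρ ⟨k, hk, K, hK, hx, hy, hρ⟩
  exact ⟨k, hk, K, hK, hx.trans h1', hy.trans h2', hρ⟩

lemma Rgw_eps (hp : IsProb p) {r1 r2 : ℝ} (hr1 : 0 ≤ r1) (hr2 : 0 ≤ r2)
    {ε : ℝ} (hε : 0 < ε) :
    ∃ (k : ℕ) (K : 𝒳 × 𝒴 → Fin k → ℝ), k ≤ Fintype.card 𝒳 * Fintype.card 𝒴 + 2 ∧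
      IsChannel K ∧ condEntX p K ≤ r1 ∧ condEntY p K ≤ r2 ∧
      mutInfoW p K < Rgw p r1 r2 + ε := by
  have h : sInf (RS p r1 r2) < Rgw p r1 r2 + ε := by
    rw [← Rgw_eq]; linarith
  obtain ⟨ρ, hρmem, hρlt⟩ := exists_lt_of_csInf_lt (RS_nonempty hp hr1 hr2) h
  obtain ⟨k, hk, K, hK, hx, hy, hρ⟩ := hρmem
  exact ⟨k, K, hk, hK, hx, hy, by rw [← hρ]; exact hρlt⟩

end RgwFacts

section Master
variable {𝒳 𝒴 : Type*} [Fintype 𝒳] [Fintype 𝒴] {p : 𝒳 × 𝒴 → ℝ}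

lemma reindex {ι : Type*} [Fintype ι] (μ : ι → ℝ) :
    ∃ (k : ℕ) (σ : Fin k → ι), k = (Finset.univ.filter (fun w => μ w ≠ 0)).card ∧
      ∀ G : ι → ℝ, ∑ j, μ (σ j) * G (σ j) = ∑ w, μ w * G w := by
  classical
  set sf := Finset.univ.filter (fun w => μ w ≠ 0) with hsf
  refine ⟨sf.card, fun j => ↑(sf.equivFin.symm j), rfl, ?_⟩
  intro G
  have h1 : ∑ j, μ ↑(sf.equivFin.symm j) * G ↑(sf.equivFin.symm j)
      = ∑ i : ↥sf, μ ↑i * G ↑i :=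
    Equiv.sum_comp sf.equivFin.symm (fun i : ↥sf => μ ↑i * G ↑i)
  rw [h1, Finset.sum_coe_sort sf (fun w => μ w * G w)]
  refine Finset.sum_subset sf.subset_univ ?_
  intro w _ hw
  have : μ w = 0 := by
    by_contra h
    exact hw (Finset.mem_filter.mpr ⟨Finset.mem_univ w, h⟩)
  rw [this, zero_mul]

lemma master {ι : Type*} [Fintype ι] (hp : IsProb p) (μ : ι → ℝ) (q : ι → 𝒳 × 𝒴 → ℝ)
    (hμ : ∀ w, 0 ≤ μ w) (hq : ∀ w, IsProb (q w))
    (hsum : ∀ a, ∑ w, μ w * q w a = p a) :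
    ∃ (k : ℕ) (K : 𝒳 × 𝒴 → Fin k → ℝ), k ≤ Fintype.card 𝒳 * Fintype.card 𝒴 + 2 ∧
      IsChannel K ∧
      condEntX p K ≤ ∑ w, μ w * entX (q w) ∧
      condEntY p K ≤ ∑ w, μ w * entY (q w) ∧
      mutInfoW p K ≤ ent p - ∑ w, μ w * ent (q w) := by
  obtain ⟨μ', hμ'0, hsum', hcard', hX', hY', hE'⟩ :=
    reduction p q hq _ μ hμ hsum rfl
  obtain ⟨k, σ, hk, hσ⟩ := reindex μ'
  refine ⟨k, ?_⟩
  have hμ'' : ∀ j, 0 ≤ μ' (σ j) := fun j => hμ'0 _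
  have hq'' : ∀ j, IsProb (q (σ j)) := fun j => hq _
  have hsum'' : ∀ a, ∑ j, μ' (σ j) * q (σ j) a = p a := by
    intro a
    rw [hσ (fun w => q w a)]
    exact hsum' a
  obtain ⟨K, hK, heq⟩ := decomp_to_chan hp hμ'' hq'' hsum''
  refine ⟨K, by rw [hk]; exact hcard', hK, ?_, ?_, ?_⟩
  · rw [decomp_condEntX hp hK hμ'' hq'' heq, hσ (fun w => entX (q w))]
    exact hX'
  · rw [decomp_condEntY hp hK hμ'' hq'' heq, hσ (fun w => entY (q w))]
    exact hY'
  · rw [decomp_mutInfo hp hK hμ'' hq'' heq, hσ (fun w => ent (q w))]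
    linarith

lemma Rgw_convex (hp : IsProb p) {a1 b1 a2 b2 t : ℝ} (ha1 : 0 ≤ a1) (hb1 : 0 ≤ b1)
    (ha2 : 0 ≤ a2) (hb2 : 0 ≤ b2) (ht0 : 0 ≤ t) (ht1 : t ≤ 1) :
    Rgw p (t * a1 + (1 - t) * a2) (t * b1 + (1 - t) * b2)
      ≤ t * Rgw p a1 b1 + (1 - t) * Rgw p a2 b2 := by
  apply le_of_forall_pos_le_add
  intro ε hε
  obtain ⟨ka, Ka, hka, hKa, hXa, hYa, hIa⟩ := Rgw_eps hp ha1 hb1 hε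
  obtain ⟨kb, Kb, hkb, hKb, hXb, hYb, hIb⟩ := Rgw_eps hp ha2 hb2 hε
  obtain ⟨qa, hqa, heqa⟩ := chan_to_decomp hp hKa
  obtain ⟨qb, hqb, heqb⟩ := chan_to_decomp hp hKb
  set μ : Fin ka ⊕ Fin kb → ℝ :=
    Sum.elim (fun w => t * outW p Ka w) (fun w => (1 - t) * outW p Kb w) with hμdef
  set q : Fin ka ⊕ Fin kb → 𝒳 × 𝒴 → ℝ := Sum.elim qa qb with hqdef
  have hμ : ∀ w, 0 ≤ μ w := by
    intro w
    rcases w with w | w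
    · exact mul_nonneg ht0 (outW_nonneg hp hKa w)
    · exact mul_nonneg (by linarith) (outW_nonneg hp hKb w)
  have hq : ∀ w, IsProb (q w) := by
    intro w
    rcases w with w | w
    · exact hqa w
    · exact hqb w
  have hpa : ∀ a, ∑ w, outW p Ka w * qa w a = p a := by
    intro a
    calc ∑ w, outW p Ka w * qa w a = ∑ w, p a * Ka a w :=
          Finset.sum_congr rfl fun w _ => (heqa a w).symm
      _ = p a := by rw [← Finset.mul_sum, (hKa a).2, mul_one]
  have hpb : ∀ a, ∑ w, outW p Kb w * qb w a = p a := by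
    intro a
    calc ∑ w, outW p Kb w * qb w a = ∑ w, p a * Kb a w :=
          Finset.sum_congr rfl fun w _ => (heqb a w).symm
      _ = p a := by rw [← Finset.mul_sum, (hKb a).2, mul_one]
  have hsum : ∀ a, ∑ w, μ w * q w a = p a := by
    intro a
    rw [Fintype.sum_sum_type]
    dsimp [μ, q]
    have e1 : ∑ w, t * outW p Ka w * qa w a = t * p a := by
      rw [← hpa a, Finset.mul_sum]
      exact Finset.sum_congr rfl fun w _ => by ring
    have e2 : ∑ w, (1 - t) * outW p Kb w * qb w a = (1 - t) * p a := by
      rw [← hpb a, Finset.mul_sum]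
      exact Finset.sum_congr rfl fun w _ => by ring
    rw [e1, e2]
    ring
  obtain ⟨k, K, hk, hK, hX, hY, hI⟩ := master hp μ q hμ hq hsum
  have hsplit : ∀ F : (𝒳 × 𝒴 → ℝ) → ℝ, ∑ w, μ w * F (q w)
      = t * (∑ w, outW p Ka w * F (qa w)) + (1 - t) * (∑ w, outW p Kb w * F (qb w)) := by
    intro F
    rw [Fintype.sum_sum_type]
    dsimp [μ, q]
    rw [Finset.mul_sum, Finset.mul_sum]
    congr 1
    · exact Finset.sum_congr rfl fun w _ => by ring
    · exact Finset.sum_congr rfl fun w _ => by ring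
  have hXval : condEntX p K ≤ t * a1 + (1 - t) * a2 := by
    refine hX.trans ?_
    rw [hsplit entX, ← decomp_condEntX hp hKa (fun w => outW_nonneg hp hKa w) hqa heqa,
      ← decomp_condEntX hp hKb (fun w => outW_nonneg hp hKb w) hqb heqb]
    have := mul_le_mul_of_nonneg_left hXa ht0
    have := mul_le_mul_of_nonneg_left hXb (by linarith : (0:ℝ) ≤ 1 - t)
    linarith
  have hYval : condEntY p K ≤ t * b1 + (1 - t) * b2 := by
    refine hY.trans ?_
    rw [hsplit entY, ← decomp_condEntY hp hKa (fun w => outW_nonneg hp hKa w) hqa heqa,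
      ← decomp_condEntY hp hKb (fun w => outW_nonneg hp hKb w) hqb heqb]
    have := mul_le_mul_of_nonneg_left hYa ht0
    have := mul_le_mul_of_nonneg_left hYb (by linarith : (0:ℝ) ≤ 1 - t)
    linarith
  have hIval : mutInfoW p K ≤ t * Rgw p a1 b1 + (1 - t) * Rgw p a2 b2 + ε := by
    refine hI.trans ?_
    rw [hsplit ent]
    have ea : ∑ w, outW p Ka w * ent (qa w) = ent p - mutInfoW p Ka := by
      rw [decomp_mutInfo hp hKa (fun w => outW_nonneg hp hKa w) hqa heqa]
      ring
    have eb : ∑ w, outW p Kb w * ent (qb w) = ent p - mutInfoW p Kb := by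
      rw [decomp_mutInfo hp hKb (fun w => outW_nonneg hp hKb w) hqb heqb]
      ring
    rw [ea, eb]
    have h1 := mul_le_mul_of_nonneg_left hIa.le ht0
    have h2 := mul_le_mul_of_nonneg_left hIb.le (by linarith : (0:ℝ) ≤ 1 - t)
    nlinarith
  exact (Rgw_le hp hk hK hXval hYval).trans hIval

end Master

section Plane
variable {𝒳 𝒴 : Type*} [Fintype 𝒳] [Fintype 𝒴] {p : 𝒳 × 𝒴 → ℝ}

set_option maxHeartbeats 1000000 in
lemma plane (hp : IsProb p) {r1s r2s lam1 lam2 : ℝ} (hr1 : 0 < r1s) (hr2 : 0 < r2s)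
    (hd1 : HasDerivAt (fun r => Rgw p r r2s) (-lam1) r1s)
    (hd2 : HasDerivAt (fun r => Rgw p r1s r) (-lam2) r2s)
    {a b : ℝ} (ha : 0 ≤ a) (hb : 0 ≤ b) :
    Rgw p r1s r2s ≤ Rgw p a b + lam1 * (a - r1s) + lam2 * (b - r2s) := by
  obtain ⟨u1, hu1⟩ : ∃ u : ℝ, u = a - r1s := ⟨_, rfl⟩
  obtain ⟨u2, hu2⟩ : ∃ u : ℝ, u = b - r2s := ⟨_, rfl⟩
  obtain ⟨R, hR⟩ : ∃ r : ℝ, r = Rgw p r1s r2s := ⟨_, rfl⟩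
  obtain ⟨D, hD⟩ : ∃ d : ℝ, d = Rgw p a b - R := ⟨_, rfl⟩
  obtain ⟨G1, hG1def⟩ : ∃ G : ℝ → ℝ, G = fun t => Rgw p (r1s - 2*u1*t) r2s := ⟨_, rfl⟩
  obtain ⟨G2, hG2def⟩ : ∃ G : ℝ → ℝ, G = fun t => Rgw p r1s (r2s - 2*u2*t) := ⟨_, rfl⟩
  have hG10 : G1 0 = R := by rw [hG1def, hR]; norm_num
  have hG20 : G2 0 = R := by rw [hG2def, hR]; norm_num
  have hg1 : HasDerivAt G1 (2*lam1*u1) 0 := by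
    rw [hG1def]
    have haff : HasDerivAt (fun t : ℝ => r1s - 2*u1*t) (-(2*u1)) 0 := by
      simpa using ((hasDerivAt_id (0:ℝ)).const_mul (2*u1)).const_sub r1s
    have hd1' : HasDerivAt (fun r => Rgw p r r2s) (-lam1) (r1s - 2*u1*0) := by
      have h0 : r1s - 2*u1*0 = r1s := by ring
      rw [h0]; exact hd1
    have hcomp := hd1'.comp (0:ℝ) haff
    have he : -lam1 * -(2*u1) = 2*lam1*u1 := by ring
    rw [← he]
    exact hcomp
  have hg2 : HasDerivAt G2 (2*lam2*u2) 0 := by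
    rw [hG2def]
    have haff : HasDerivAt (fun t : ℝ => r2s - 2*u2*t) (-(2*u2)) 0 := by
      simpa using ((hasDerivAt_id (0:ℝ)).const_mul (2*u2)).const_sub r2s
    have hd2' : HasDerivAt (fun r => Rgw p r1s r) (-lam2) (r2s - 2*u2*0) := by
      have h0 : r2s - 2*u2*0 = r2s := by ring
      rw [h0]; exact hd2
    have hcomp := hd2'.comp (0:ℝ) haff
    have he : -lam2 * -(2*u2) = 2*lam2*u2 := by ring
    rw [← he]
    exact hcomp
  have hmono : (nhdsWithin (0:ℝ) (Set.Ioi 0)) ≤ (nhdsWithin (0:ℝ) {(0:ℝ)}ᶜ) :=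
    nhdsWithin_mono 0 (fun x hx => ne_of_gt hx)
  have hs1 : Filter.Tendsto (slope G1 0) (nhdsWithin 0 (Set.Ioi 0)) (nhds (2*lam1*u1)) :=
    (hasDerivAt_iff_tendsto_slope.mp hg1).mono_left hmono
  have hs2 : Filter.Tendsto (slope G2 0) (nhdsWithin 0 (Set.Ioi 0)) (nhds (2*lam2*u2)) :=
    (hasDerivAt_iff_tendsto_slope.mp hg2).mono_left hmono
  obtain ⟨Φ, hΦdef⟩ : ∃ F : ℝ → ℝ,
      F = fun t => (-(1/2)) * slope G1 0 t + (-(1/2)) * slope G2 0 t := ⟨_, rfl⟩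
  have hΦlim : Filter.Tendsto Φ (nhdsWithin 0 (Set.Ioi 0))
      (nhds ((-(1/2)) * (2*lam1*u1) + (-(1/2)) * (2*lam2*u2))) := by
    rw [hΦdef]
    exact (hs1.const_mul (-(1/2))).add (hs2.const_mul (-(1/2)))
  obtain ⟨t₀, ht₀def⟩ : ∃ s : ℝ,
      s = min 1 (min (r1s / (2*|u1| + 1)) (r2s / (2*|u2| + 1))) := ⟨_, rfl⟩
  have habs1 : (0:ℝ) < 2*|u1| + 1 := by positivity
  have habs2 : (0:ℝ) < 2*|u2| + 1 := by positivity
  have ht₀pos : 0 < t₀ := by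
    rw [ht₀def]
    apply lt_min (by norm_num)
    exact lt_min (div_pos hr1 habs1) (div_pos hr2 habs2)
  have hbound : ∀ t ∈ Set.Ioc (0:ℝ) t₀, Φ t ≤ D := by
    intro t ht
    obtain ⟨htpos, htle⟩ := ht
    rw [ht₀def] at htle
    have ht1 : t ≤ 1 := htle.trans (min_le_left _ _)
    have htu1 : t * (2*|u1| + 1) ≤ r1s := by
      have := htle.trans ((min_le_right _ _).trans (min_le_left _ _))
      exact (le_div_iff₀ habs1).mp this
    have htu2 : t * (2*|u2| + 1) ≤ r2s := by
      have := htle.trans ((min_le_right _ _).trans (min_le_right _ _))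
      exact (le_div_iff₀ habs2).mp this
    have hau1 : u1 ≤ |u1| := le_abs_self _
    have hau1' : -|u1| ≤ u1 := neg_abs_le _
    have hau2 : u2 ≤ |u2| := le_abs_self _
    have hau2' : -|u2| ≤ u2 := neg_abs_le _
    have htabs1 : 0 ≤ t * |u1| := mul_nonneg htpos.le (abs_nonneg _)
    have htabs2 : 0 ≤ t * |u2| := mul_nonneg htpos.le (abs_nonneg _)
    have hQ1 : 0 ≤ r1s - 2*u1*t := by nlinarith
    have hQ2 : 0 ≤ r2s - 2*u2*t := by nlinarith
    have hM1 : 0 ≤ r1s - u1*t := by nlinarith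
    have hM2 : 0 ≤ r2s - u2*t := by nlinarith
    have hP1 : 0 ≤ t*a + (1-t)*r1s := by
      have : 0 ≤ t * a := mul_nonneg htpos.le ha
      nlinarith
    have hP2 : 0 ≤ t*b + (1-t)*r2s := by
      have : 0 ≤ t * b := mul_nonneg htpos.le hb
      nlinarith
    have C1 := Rgw_convex hp ha hb hr1.le hr2.le htpos.le ht1
    have C2 := Rgw_convex hp hP1 hP2 hM1 hM2
      (by norm_num : (0:ℝ) ≤ 1/2) (by norm_num : (1:ℝ)/2 ≤ 1)
    have C3 := Rgw_convex hp hQ1 hr2.le hr1.le hQ2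
      (by norm_num : (0:ℝ) ≤ 1/2) (by norm_num : (1:ℝ)/2 ≤ 1)
    rw [show (1/2) * (t*a + (1-t)*r1s) + (1 - 1/2) * (r1s - u1*t) = r1s by
        rw [hu1]; ring,
      show (1/2) * (t*b + (1-t)*r2s) + (1 - 1/2) * (r2s - u2*t) = r2s by
        rw [hu2]; ring] at C2
    rw [show (1/2) * (r1s - 2*u1*t) + (1 - 1/2) * r1s = r1s - u1*t by ring,
      show (1/2) * r2s + (1 - 1/2) * (r2s - 2*u2*t) = r2s - u2*t by ring] at C3
    have hG1t : G1 t = Rgw p (r1s - 2*u1*t) r2s := by rw [hG1def]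
    have hG2t : G2 t = Rgw p r1s (r2s - 2*u2*t) := by rw [hG2def]
    have key : -(D * t) ≤ (1/2) * (G1 t - R) + (1/2) * (G2 t - R) := by
      rw [hG1t, hG2t, hD, hR]
      nlinarith [C2, C3, C1]
    have hslope1 : slope G1 0 t = (G1 t - R) / t := by
      rw [slope_def_field, hG10, sub_zero]
    have hslope2 : slope G2 0 t = (G2 t - R) / t := by
      rw [slope_def_field, hG20, sub_zero]
    rw [hΦdef]
    dsimp only
    rw [hslope1, hslope2]
    rw [show (-(1/2)) * ((G1 t - R)/t) + (-(1/2)) * ((G2 t - R)/t)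
        = (-((1/2) * (G1 t - R) + (1/2) * (G2 t - R))) / t by ring]
    rw [div_le_iff₀ htpos]
    linarith [key]
  have hev : ∀ᶠ t in nhdsWithin 0 (Set.Ioi 0), Φ t ≤ D :=
    Filter.eventually_of_mem (Ioc_mem_nhdsGT ht₀pos) hbound
  have hfin := le_of_tendsto hΦlim hev
  have hfin2 : -(lam1*u1) - lam2*u2 ≤ D := by linarith [hfin]
  rw [hD, hR, hu1, hu2] at hfin2
  linarith

end Plane

section Core
variable {𝒳 𝒴 : Type*} [Fintype 𝒳] [Fintype 𝒴] {p : 𝒳 × 𝒴 → ℝ}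

lemma condEntX_nonneg {𝒲 : Type*} [Fintype 𝒲] {K : 𝒳 × 𝒴 → 𝒲 → ℝ}
    (hp : IsProb p) (hK : IsChannel K) : 0 ≤ condEntX p K := by
  obtain ⟨q, hq, heq⟩ := chan_to_decomp hp hK
  rw [decomp_condEntX hp hK (outW_nonneg hp hK) hq heq]
  exact Finset.sum_nonneg fun w _ => mul_nonneg (outW_nonneg hp hK w) (entX_nonneg (hq w))

lemma condEntY_nonneg {𝒲 : Type*} [Fintype 𝒲] {K : 𝒳 × 𝒴 → 𝒲 → ℝ}
    (hp : IsProb p) (hK : IsChannel K) : 0 ≤ condEntY p K := by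
  obtain ⟨q, hq, heq⟩ := chan_to_decomp hp hK
  rw [decomp_condEntY hp hK (outW_nonneg hp hK) hq heq]
  exact Finset.sum_nonneg fun w _ => mul_nonneg (outW_nonneg hp hK w) (entY_nonneg (hq w))

set_option maxHeartbeats 800000 in
lemma core_bound {𝒲 : Type*} [Fintype 𝒲] (hp : IsProb p)
    {r1s r2s lam1 lam2 : ℝ} (hr1 : 0 < r1s) (hr2 : 0 < r2s)
    (hd1 : HasDerivAt (fun r => Rgw p r r2s) (-lam1) r1s)
    (hd2 : HasDerivAt (fun r => Rgw p r1s r) (-lam2) r2s)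
    (hl1 : 0 < lam1) (hl2 : 0 < lam2)
    {C : 𝒳 × 𝒴 → 𝒲 → ℝ} (hC : IsChannel C) :
    Rgw p r1s r2s
      ≤ mutInfoW p C + lam1 * (condEntX p C - r1s) + lam2 * (condEntY p C - r2s) := by
  obtain ⟨qc, hqc, heqc⟩ := chan_to_decomp hp hC
  have hμ : ∀ w, 0 ≤ outW p C w := outW_nonneg hp hC
  have hsum : ∀ a, ∑ w, outW p C w * qc w a = p a := by
    intro a
    calc ∑ w, outW p C w * qc w a = ∑ w, p a * C a w :=
          Finset.sum_congr rfl fun w _ => (heqc a w).symm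
      _ = p a := by rw [← Finset.mul_sum, (hC a).2, mul_one]
  obtain ⟨k, K, hk, hK, hX, hY, hI⟩ := master hp (outW p C) qc hμ hqc hsum
  have eX : condEntX p C = ∑ w, outW p C w * entX (qc w) :=
    decomp_condEntX hp hC hμ hqc heqc
  have eY : condEntY p C = ∑ w, outW p C w * entY (qc w) :=
    decomp_condEntY hp hC hμ hqc heqc
  have eI : mutInfoW p C = ent p - ∑ w, outW p C w * ent (qc w) :=
    decomp_mutInfo hp hC hμ hqc heqc
  have hpl := plane hp hr1 hr2 hd1 hd2 (condEntX_nonneg hp hK) (condEntY_nonneg hp hK)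
  have hRle : Rgw p (condEntX p K) (condEntY p K) ≤ mutInfoW p K :=
    Rgw_le hp hk hK le_rfl le_rfl
  have m1 : mutInfoW p K ≤ mutInfoW p C := by rw [eI]; exact hI
  have m2 : condEntX p K ≤ condEntX p C := by rw [eX]; exact hX
  have m3 : condEntY p K ≤ condEntY p C := by rw [eY]; exact hY
  have hmul1 := mul_le_mul_of_nonneg_left m2 hl1.le
  have hmul2 := mul_le_mul_of_nonneg_left m3 hl2.le
  calc Rgw p r1s r2s
      ≤ Rgw p (condEntX p K) (condEntY p K)
        + lam1 * (condEntX p K - r1s) + lam2 * (condEntY p K - r2s) := hpl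
    _ ≤ mutInfoW p C + lam1 * (condEntX p C - r1s) + lam2 * (condEntY p C - r2s) := by
        have e1 : lam1 * (condEntX p K - r1s) = lam1 * condEntX p K - lam1 * r1s := by ring
        have e2 : lam2 * (condEntY p K - r2s) = lam2 * condEntY p K - lam2 * r2s := by ring
        have e3 : lam1 * (condEntX p C - r1s) = lam1 * condEntX p C - lam1 * r1s := by ring
        have e4 : lam2 * (condEntY p C - r2s) = lam2 * condEntY p C - lam2 * r2s := by ring
        rw [e1, e2, e3, e4]
        linarith [hRle]

end Core

section Chains
variable {𝒳 𝒴 : Type*} [Fintype 𝒳] [Fintype 𝒴] {p : 𝒳 × 𝒴 → ℝ}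

/-- The quantity inside the logarithm defining `Lam`. -/
noncomputable def nuF {𝒲 : Type*} [Fintype 𝒲] (r1 r2 lam1 lam2 : ℝ) (QW : 𝒲 → ℝ)
    (QX : 𝒲 → 𝒳 → ℝ) (QY : 𝒲 → 𝒴 → ℝ) (x : 𝒳) (y : 𝒴) : ℝ :=
  ∑ w, QW w * (if QX w x = 0 ∨ QY w y = 0 then 0 else
    (2 : ℝ) ^ (lam1 * (r1 + Real.logb 2 (QX w x)) + lam2 * (r2 + Real.logb 2 (QY w y))))

lemma Lam_eq_nuF {𝒲 : Type*} [Fintype 𝒲] (r1 r2 lam1 lam2 : ℝ) (QW : 𝒲 → ℝ)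
    (QX : 𝒲 → 𝒳 → ℝ) (QY : 𝒲 → 𝒴 → ℝ) (x : 𝒳) (y : 𝒴) :
    Lam r1 r2 lam1 lam2 QW QX QY x y
      = - Real.logb 2 (nuF r1 r2 lam1 lam2 QW QX QY x y) := rfl

lemma condXW_nonneg {𝒲 : Type*} [Fintype 𝒲] {K : 𝒳 × 𝒴 → 𝒲 → ℝ}
    (hp : IsProb p) (hK : IsChannel K) (w : 𝒲) (x : 𝒳) : 0 ≤ condXW p K w x :=
  div_nonneg (margWX_nonneg hp hK w x) (outW_nonneg hp hK w)

lemma condYW_nonneg {𝒲 : Type*} [Fintype 𝒲] {K : 𝒳 × 𝒴 → 𝒲 → ℝ}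
    (hp : IsProb p) (hK : IsChannel K) (w : 𝒲) (y : 𝒴) : 0 ≤ condYW p K w y :=
  div_nonneg (margWY_nonneg hp hK w y) (outW_nonneg hp hK w)

lemma condXW_sum_le {𝒲 : Type*} [Fintype 𝒲] {K : 𝒳 × 𝒴 → 𝒲 → ℝ} (w : 𝒲) :
    ∑ x, condXW p K w x ≤ 1 := by
  unfold condXW
  rw [← Finset.sum_div, margWX_sum]
  rcases eq_or_ne (outW p K w) 0 with h | h
  · rw [h, div_zero]; norm_num
  · rw [div_self h]

lemma condYW_sum_le {𝒲 : Type*} [Fintype 𝒲] {K : 𝒳 × 𝒴 → 𝒲 → ℝ} (w : 𝒲) :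
    ∑ y, condYW p K w y ≤ 1 := by
  unfold condYW
  rw [← Finset.sum_div, margWY_sum]
  rcases eq_or_ne (outW p K w) 0 with h | h
  · rw [h, div_zero]; norm_num
  · rw [div_self h]

lemma hKzero {𝒲 : Type*} [Fintype 𝒲] {K : 𝒳 × 𝒴 → 𝒲 → ℝ}
    (hp : IsProb p) (hK : IsChannel K) (a : 𝒳 × 𝒴) (w : 𝒲) (hpa : 0 < p a)
    (h : outW p K w = 0 ∨ margWX p K (w, a.1) = 0 ∨ margWY p K (w, a.2) = 0) :
    K a w = 0 := by
  have h2 : 0 ≤ p a * K a w := mul_nonneg hpa.le ((hK a).1 w)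
  have h1 : p a * K a w ≤ 0 := by
    rcases h with h | h | h
    · exact h ▸ pK_le_outW hp hK a w
    · exact h ▸ pK_le_margWX hp hK a.1 a.2 w
    · exact h ▸ pK_le_margWY hp hK a.1 a.2 w
  exact (mul_eq_zero.mp (le_antisymm h1 h2)).resolve_left hpa.ne'

set_option maxHeartbeats 1600000 in
lemma chain1 {𝒲 : Type*} [Fintype 𝒲] (hp : IsProb p) {K : 𝒳 × 𝒴 → 𝒲 → ℝ}
    (hK : IsChannel K) (r1 r2 lam1 lam2 : ℝ) :
    ∑ a : 𝒳 × 𝒴, p a * Lam r1 r2 lam1 lam2 (outW p K) (condXW p K) (condYW p K) a.1 a.2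
      ≤ mutInfoW p K + lam1 * (condEntX p K - r1) + lam2 * (condEntY p K - r2) := by
  classical
  set br : 𝒳 × 𝒴 → 𝒲 → ℝ := fun a w =>
    Real.logb 2 (K a w / outW p K w)
      + lam1 * (- Real.logb 2 (condXW p K w a.1) - r1)
      + lam2 * (- Real.logb 2 (condYW p K w a.2) - r2) with hbr
  have hIneq : ∀ a, 0 < p a →
      Lam r1 r2 lam1 lam2 (outW p K) (condXW p K) (condYW p K) a.1 a.2
        ≤ ∑ w, K a w * br a w := by
    intro a hpa
    set c : 𝒲 → ℝ := fun w =>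
      outW p K w * (if condXW p K w a.1 = 0 ∨ condYW p K w a.2 = 0 then 0 else
        (2 : ℝ) ^ (lam1 * (r1 + Real.logb 2 (condXW p K w a.1))
          + lam2 * (r2 + Real.logb 2 (condYW p K w a.2)))) with hc
    have hcapp : ∀ w, c w = outW p K w *
        (if condXW p K w a.1 = 0 ∨ condYW p K w a.2 = 0 then 0 else
          (2 : ℝ) ^ (lam1 * (r1 + Real.logb 2 (condXW p K w a.1))
            + lam2 * (r2 + Real.logb 2 (condYW p K w a.2)))) := fun w => rfl
    have hc0 : ∀ w, 0 ≤ c w := by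
      intro w
      rw [hcapp w]
      apply mul_nonneg (outW_nonneg hp hK w)
      rcases em (condXW p K w a.1 = 0 ∨ condYW p K w a.2 = 0) with h | h
      · rw [if_pos h]
      · rw [if_neg h]
        exact (Real.rpow_pos_of_pos (by norm_num) _).le
    have hvan : ∀ w, c w = 0 → K a w = 0 := by
      intro w hw
      rw [hcapp w] at hw
      rcases mul_eq_zero.mp hw with h | h
      · exact hKzero hp hK a w hpa (Or.inl h)
      · rcases em (condXW p K w a.1 = 0 ∨ condYW p K w a.2 = 0) with hcnd | hcnd
        · rcases em (outW p K w = 0) with hout | hout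
          · exact hKzero hp hK a w hpa (Or.inl hout)
          · rcases hcnd with hcnd | hcnd
            · refine hKzero hp hK a w hpa (Or.inr (Or.inl ?_))
              unfold condXW at hcnd
              exact (div_eq_zero_iff.mp hcnd).resolve_right hout
            · refine hKzero hp hK a w hpa (Or.inr (Or.inr ?_))
              unfold condYW at hcnd
              exact (div_eq_zero_iff.mp hcnd).resolve_right hout
        · rw [if_neg hcnd] at h
          exact absurd h (ne_of_gt (Real.rpow_pos_of_pos (by norm_num) _))
    have hg := gibbs (K a) c (hK a).1 (hK a).2 hc0 hvan
    have hLam : Lam r1 r2 lam1 lam2 (outW p K) (condXW p K) (condYW p K) a.1 a.2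
        = - Real.logb 2 (∑ w, c w) := by
      rw [hc]; rfl
    rw [hLam]
    refine hg.trans (le_of_eq (Finset.sum_congr rfl fun w _ => ?_))
    rcases eq_or_ne (K a w) 0 with h0 | h0
    · rw [h0, zero_mul, zero_mul]
    · have hKpos : 0 < K a w := (((hK a).1 w).lt_or_eq.resolve_right (Ne.symm h0))
      have hcne : c w ≠ 0 := fun hcw => h0 (hvan w hcw)
      have houtne : outW p K w ≠ 0 := by
        intro hout
        apply hcne
        rw [hcapp w, hout, zero_mul]
      have houtpos : 0 < outW p K w := (outW_nonneg hp hK w).lt_or_eq.resolve_right (Ne.symm houtne)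
      have hcnd : ¬ (condXW p K w a.1 = 0 ∨ condYW p K w a.2 = 0) := by
        intro hcnd
        apply hcne
        rw [hcapp w, if_pos hcnd, mul_zero]
      have hcw : c w = outW p K w *
          (2 : ℝ) ^ (lam1 * (r1 + Real.logb 2 (condXW p K w a.1))
            + lam2 * (r2 + Real.logb 2 (condYW p K w a.2))) := by
        rw [hcapp w, if_neg hcnd]
      have h2e : (0:ℝ) < (2 : ℝ) ^ (lam1 * (r1 + Real.logb 2 (condXW p K w a.1))
          + lam2 * (r2 + Real.logb 2 (condYW p K w a.2))) :=
        Real.rpow_pos_of_pos (by norm_num) _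
      rw [hcw, Real.logb_div hKpos.ne' (mul_ne_zero houtne h2e.ne'),
        Real.logb_mul houtne h2e.ne',
        Real.logb_rpow (by norm_num) (by norm_num), hbr]
      dsimp only
      rw [Real.logb_div hKpos.ne' houtne]
      ring
  have step1 : ∑ a : 𝒳 × 𝒴,
      p a * Lam r1 r2 lam1 lam2 (outW p K) (condXW p K) (condYW p K) a.1 a.2
      ≤ ∑ a : 𝒳 × 𝒴, ∑ w, p a * K a w * br a w := by
    refine Finset.sum_le_sum fun a _ => ?_
    rcases (hp.1 a).lt_or_eq with hpa | hpa
    · calc p a * Lam r1 r2 lam1 lam2 (outW p K) (condXW p K) (condYW p K) a.1 a.2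
          ≤ p a * ∑ w, K a w * br a w :=
            mul_le_mul_of_nonneg_left (hIneq a hpa) hpa.le
        _ = ∑ w, p a * K a w * br a w := by
            rw [Finset.mul_sum]
            exact Finset.sum_congr rfl fun w _ => by ring
    · rw [← hpa]
      simp
  refine step1.trans (le_of_eq ?_)
  have expand : ∀ (a : 𝒳 × 𝒴) (w : 𝒲), p a * K a w * br a w =
      p a * K a w * Real.logb 2 (K a w / outW p K w)
      + lam1 * (p a * K a w * (- Real.logb 2 (margWX p K (w, a.1) / outW p K w)))
      + lam2 * (p a * K a w * (- Real.logb 2 (margWY p K (w, a.2) / outW p K w)))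
      - lam1 * r1 * (p a * K a w) - lam2 * r2 * (p a * K a w) := by
    intro a w
    rw [hbr]
    dsimp only
    unfold condXW condYW
    ring
  have hsum1 : ∑ a : 𝒳 × 𝒴, ∑ w, p a * K a w = 1 := by
    calc ∑ a : 𝒳 × 𝒴, ∑ w, p a * K a w = ∑ a : 𝒳 × 𝒴, p a :=
          Finset.sum_congr rfl fun a _ => by rw [← Finset.mul_sum, (hK a).2, mul_one]
      _ = 1 := hp.2
  have pull : ∀ (c : ℝ) (f : 𝒳 × 𝒴 → 𝒲 → ℝ),
      ∑ a : 𝒳 × 𝒴, ∑ w, c * f a w = c * ∑ a : 𝒳 × 𝒴, ∑ w, f a w := by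
    intro c f
    rw [Finset.mul_sum]
    exact Finset.sum_congr rfl fun a _ => by rw [Finset.mul_sum]
  rw [Finset.sum_congr rfl (fun a (_ : a ∈ Finset.univ) =>
    Finset.sum_congr rfl (fun w _ => expand a w))]
  simp only [Finset.sum_add_distrib, Finset.sum_sub_distrib]
  rw [pull lam1 (fun a w => p a * K a w * (- Real.logb 2 (margWX p K (w, a.1) / outW p K w))),
    pull lam2 (fun a w => p a * K a w * (- Real.logb 2 (margWY p K (w, a.2) / outW p K w))),
    pull (lam1 * r1) (fun a w => p a * K a w),
    pull (lam2 * r2) (fun a w => p a * K a w),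
    ← idI hp hK, ← idX hp hK, ← idY hp hK, hsum1]
  ring


set_option maxHeartbeats 3200000 in
lemma chain2 {𝒲 : Type*} [Fintype 𝒲] (hp : IsProb p)
    {QW : 𝒲 → ℝ} {QX : 𝒲 → 𝒳 → ℝ} {QY : 𝒲 → 𝒴 → ℝ}
    (hQW0 : ∀ w, 0 ≤ QW w) (hQW1 : ∑ w, QW w = 1)
    (hQX0 : ∀ w x, 0 ≤ QX w x) (hQX1 : ∀ w, ∑ x, QX w x ≤ 1)
    (hQY0 : ∀ w y, 0 ≤ QY w y) (hQY1 : ∀ w, ∑ y, QY w y ≤ 1)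
    (r1 r2 lam1 lam2 : ℝ) (hl1 : 0 ≤ lam1) (hl2 : 0 ≤ lam2)
    (hν : ∀ a : 𝒳 × 𝒴, 0 < p a → 0 < nuF r1 r2 lam1 lam2 QW QX QY a.1 a.2) :
    ∃ K : 𝒳 × 𝒴 → 𝒲 → ℝ, IsChannel K ∧
      mutInfoW p K + lam1 * (condEntX p K - r1) + lam2 * (condEntY p K - r2)
        ≤ ∑ a : 𝒳 × 𝒴, p a * Lam r1 r2 lam1 lam2 QW QX QY a.1 a.2 := by
  classical
  set ν : 𝒳 × 𝒴 → ℝ := fun a => nuF r1 r2 lam1 lam2 QW QX QY a.1 a.2 with hν_def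
  set c : 𝒳 × 𝒴 → 𝒲 → ℝ := fun a w => QW w *
    (if QX w a.1 = 0 ∨ QY w a.2 = 0 then 0 else
      (2:ℝ) ^ (lam1 * (r1 + Real.logb 2 (QX w a.1))
        + lam2 * (r2 + Real.logb 2 (QY w a.2)))) with hc_def
  have hcapp : ∀ a w, c a w = QW w *
      (if QX w a.1 = 0 ∨ QY w a.2 = 0 then 0 else
        (2:ℝ) ^ (lam1 * (r1 + Real.logb 2 (QX w a.1))
          + lam2 * (r2 + Real.logb 2 (QY w a.2)))) := fun a w => rfl
  have hc0 : ∀ a w, 0 ≤ c a w := by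
    intro a w
    rw [hcapp]
    apply mul_nonneg (hQW0 w)
    rcases em (QX w a.1 = 0 ∨ QY w a.2 = 0) with h | h
    · rw [if_pos h]
    · rw [if_neg h]
      exact (Real.rpow_pos_of_pos (by norm_num) _).le
  have hcsum : ∀ a, ∑ w, c a w = ν a := fun a => rfl
  have hνpos : ∀ a, p a ≠ 0 → 0 < ν a :=
    fun a h => hν a ((hp.1 a).lt_or_eq.resolve_right (Ne.symm h))
  set K : 𝒳 × 𝒴 → 𝒲 → ℝ := fun a w => if p a = 0 then QW w else c a w / ν a with hK_def
  have hKapp : ∀ a w, K a w = if p a = 0 then QW w else c a w / ν a := fun a w => rfl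
  have hK0 : ∀ a w, 0 ≤ K a w := by
    intro a w
    rw [hKapp]
    by_cases h : p a = 0
    · rw [if_pos h]; exact hQW0 w
    · rw [if_neg h]; exact div_nonneg (hc0 a w) (hνpos a h).le
  have hKch : IsChannel K := by
    intro a
    refine ⟨hK0 a, ?_⟩
    by_cases h : p a = 0
    · calc ∑ w, K a w = ∑ w, QW w := Finset.sum_congr rfl fun w _ => by rw [hKapp, if_pos h]
        _ = 1 := hQW1
    · calc ∑ w, K a w = ∑ w, c a w / ν a :=
          Finset.sum_congr rfl fun w _ => by rw [hKapp, if_neg h]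
        _ = (∑ w, c a w) / ν a := by rw [Finset.sum_div]
        _ = 1 := by rw [hcsum, div_self (hνpos a h).ne']
  have hKc : ∀ a w, p a ≠ 0 → K a w = c a w / ν a := by
    intro a w h
    rw [hKapp, if_neg h]
  have hKvan : ∀ a w, p a ≠ 0 → c a w = 0 → K a w = 0 := by
    intro a w h hc'
    rw [hKc a w h, hc', zero_div]
  have hfacts : ∀ a w, p a * K a w ≠ 0 →
      0 < p a ∧ 0 < K a w ∧ 0 < QW w ∧ ¬ (QX w a.1 = 0 ∨ QY w a.2 = 0) := by
    intro a w h
    have hpa : p a ≠ 0 := fun h' => h (by rw [h', zero_mul])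
    have hKa : K a w ≠ 0 := fun h' => h (by rw [h', mul_zero])
    have hcne : c a w ≠ 0 := fun h' => hKa (hKvan a w hpa h')
    have hQWne : QW w ≠ 0 := by
      intro h'
      apply hcne
      rw [hcapp, h', zero_mul]
    have hcnd : ¬ (QX w a.1 = 0 ∨ QY w a.2 = 0) := by
      intro h'
      apply hcne
      rw [hcapp, if_pos h', mul_zero]
    exact ⟨(hp.1 a).lt_or_eq.resolve_right (Ne.symm hpa),
      (hK0 a w).lt_or_eq.resolve_right (Ne.symm hKa),
      (hQW0 w).lt_or_eq.resolve_right (Ne.symm hQWne), hcnd⟩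
  set brQ : 𝒳 × 𝒴 → 𝒲 → ℝ := fun a w =>
    Real.logb 2 (K a w / QW w) - lam1 * (r1 + Real.logb 2 (QX w a.1))
      - lam2 * (r2 + Real.logb 2 (QY w a.2)) with hbrQ
  refine ⟨K, hKch, ?_⟩
  -- Step A : the expectation of Lam equals the double sum of p K brQ
  have stepA : ∑ a : 𝒳 × 𝒴, p a * Lam r1 r2 lam1 lam2 QW QX QY a.1 a.2
      = ∑ a : 𝒳 × 𝒴, ∑ w, p a * K a w * brQ a w := by
    refine Finset.sum_congr rfl fun a _ => ?_
    by_cases hpa : p a = 0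
    · rw [hpa]
      simp
    · have hνa := hνpos a hpa
      have hper : ∀ w, K a w * brQ a w = K a w * (- Real.logb 2 (ν a)) := by
        intro w
        rcases eq_or_ne (K a w) 0 with h0 | h0
        · rw [h0, zero_mul, zero_mul]
        · have hcne : c a w ≠ 0 := fun h' => h0 (hKvan a w hpa h')
          have hQWne : QW w ≠ 0 := by
            intro h'
            apply hcne
            rw [hcapp, h', zero_mul]
          have hcnd : ¬ (QX w a.1 = 0 ∨ QY w a.2 = 0) := by
            intro h'
            apply hcne
            rw [hcapp, if_pos h', mul_zero]
          have h2e : (0:ℝ) < (2:ℝ) ^ (lam1 * (r1 + Real.logb 2 (QX w a.1))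
              + lam2 * (r2 + Real.logb 2 (QY w a.2))) :=
            Real.rpow_pos_of_pos (by norm_num) _
          have hKQW : K a w / QW w = (2:ℝ) ^ (lam1 * (r1 + Real.logb 2 (QX w a.1))
              + lam2 * (r2 + Real.logb 2 (QY w a.2))) / ν a := by
            rw [hKc a w hpa, hcapp, if_neg hcnd]
            field_simp
          rw [hbrQ]
          dsimp only
          rw [hKQW, Real.logb_div h2e.ne' hνa.ne',
            Real.logb_rpow (by norm_num) (by norm_num)]
          ring
      have hrow : ∑ w, K a w = 1 := (hKch a).2
      have hLam : Lam r1 r2 lam1 lam2 QW QX QY a.1 a.2 = - Real.logb 2 (ν a) := rfl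
      calc p a * Lam r1 r2 lam1 lam2 QW QX QY a.1 a.2
          = p a * ((∑ w, K a w) * (- Real.logb 2 (ν a))) := by rw [hrow, hLam]; ring
        _ = p a * (∑ w, K a w * (- Real.logb 2 (ν a))) := by rw [Finset.sum_mul]
        _ = p a * (∑ w, K a w * brQ a w) := by
            rw [Finset.sum_congr rfl fun w _ => (hper w).symm]
        _ = ∑ w, p a * K a w * brQ a w := by
            rw [Finset.mul_sum]
            exact Finset.sum_congr rfl fun w _ => by ring
  rw [stepA]
  -- Step B : lower bound the double sum
  have hvanw : ∀ w, QW w = 0 → outW p K w = 0 := by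
    intro w hw
    apply Finset.sum_eq_zero
    intro a _
    by_cases hpa : p a = 0
    · rw [hpa, zero_mul]
    · have : c a w = 0 := by rw [hcapp, hw, zero_mul]
      rw [hKvan a w hpa this, mul_zero]
  have hvanX : ∀ w x, QX w x = 0 → margWX p K (w, x) = 0 := by
    intro w x hx
    apply Finset.sum_eq_zero
    intro y _
    by_cases hpa : p (x, y) = 0
    · rw [hpa, zero_mul]
    · have : c (x, y) w = 0 := by
        rw [hcapp, if_pos (Or.inl hx), mul_zero]
      rw [hKvan (x, y) w hpa this, mul_zero]
  have hvanY : ∀ w y, QY w y = 0 → margWY p K (w, y) = 0 := by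
    intro w y hy
    apply Finset.sum_eq_zero
    intro x _
    by_cases hpa : p (x, y) = 0
    · rw [hpa, zero_mul]
    · have : c (x, y) w = 0 := by
        rw [hcapp, if_pos (Or.inr hy), mul_zero]
      rw [hKvan (x, y) w hpa this, mul_zero]
  have hTW : 0 ≤ ∑ w, outW p K w * Real.logb 2 (outW p K w / QW w) := by
    have hg := gibbs (outW p K) QW (outW_nonneg hp hKch) (outW_sum_one hp hKch) hQW0 hvanw
    rw [hQW1, Real.logb_one, neg_zero] at hg
    exact hg
  have hTX : 0 ≤ ∑ w, ∑ x, margWX p K (w, x) *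
      (Real.logb 2 (margWX p K (w, x) / outW p K w) - Real.logb 2 (QX w x)) := by
    apply Finset.sum_nonneg
    intro w _
    rcases eq_or_ne (outW p K w) 0 with hM | hM
    · apply le_of_eq
      symm
      apply Finset.sum_eq_zero
      intro x _
      have h1 : margWX p K (w, x) ≤ 0 := by
        rw [← hM, ← margWX_sum (p := p) (K := K) w]
        exact Finset.single_le_sum (fun x' (_ : x' ∈ Finset.univ) =>
          margWX_nonneg hp hKch w x') (Finset.mem_univ x)
      rw [le_antisymm h1 (margWX_nonneg hp hKch w x), zero_mul]
    · have hMpos : 0 < outW p K w := (outW_nonneg hp hKch w).lt_or_eq.resolve_right (Ne.symm hM)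
      have hk1 : ∑ x, margWX p K (w, x) / outW p K w = 1 := by
        rw [← Finset.sum_div, margWX_sum, div_self hM]
      have hvloc : ∀ x, QX w x = 0 → margWX p K (w, x) / outW p K w = 0 := by
        intro x hx
        rw [hvanX w x hx, zero_div]
      have hg := gibbs (fun x => margWX p K (w, x) / outW p K w) (QX w)
        (fun x => div_nonneg (margWX_nonneg hp hKch w x) hMpos.le) hk1 (hQX0 w) hvloc
      have h0 : 0 ≤ - Real.logb 2 (∑ x, QX w x) := by
        rw [neg_nonneg]
        exact Real.logb_nonpos (by norm_num)
          (Finset.sum_nonneg fun x _ => hQX0 w x) (hQX1 w)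
      have hrw : ∑ x, margWX p K (w, x) *
          (Real.logb 2 (margWX p K (w, x) / outW p K w) - Real.logb 2 (QX w x))
          = outW p K w * ∑ x, (margWX p K (w, x) / outW p K w) *
            Real.logb 2 ((margWX p K (w, x) / outW p K w) / QX w x) := by
        rw [Finset.mul_sum]
        refine Finset.sum_congr rfl fun x _ => ?_
        rcases eq_or_ne (margWX p K (w, x)) 0 with hm | hm
        · rw [hm, zero_mul, zero_div, zero_mul, mul_zero]
        · have hQXne : QX w x ≠ 0 := by
            intro h'
            exact hm (hvanX w x h')
          have hdivne : margWX p K (w, x) / outW p K w ≠ 0 := div_ne_zero hm hM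
          rw [Real.logb_div hdivne hQXne]
          field_simp
      rw [hrw]
      exact mul_nonneg hMpos.le (le_trans h0 hg)
  have hTY : 0 ≤ ∑ w, ∑ y, margWY p K (w, y) *
      (Real.logb 2 (margWY p K (w, y) / outW p K w) - Real.logb 2 (QY w y)) := by
    apply Finset.sum_nonneg
    intro w _
    rcases eq_or_ne (outW p K w) 0 with hM | hM
    · apply le_of_eq
      symm
      apply Finset.sum_eq_zero
      intro y _
      have h1 : margWY p K (w, y) ≤ 0 := by
        rw [← hM, ← margWY_sum (p := p) (K := K) w]
        exact Finset.single_le_sum (fun y' (_ : y' ∈ Finset.univ) =>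
          margWY_nonneg hp hKch w y') (Finset.mem_univ y)
      rw [le_antisymm h1 (margWY_nonneg hp hKch w y), zero_mul]
    · have hMpos : 0 < outW p K w := (outW_nonneg hp hKch w).lt_or_eq.resolve_right (Ne.symm hM)
      have hk1 : ∑ y, margWY p K (w, y) / outW p K w = 1 := by
        rw [← Finset.sum_div, margWY_sum, div_self hM]
      have hvloc : ∀ y, QY w y = 0 → margWY p K (w, y) / outW p K w = 0 := by
        intro y hy
        rw [hvanY w y hy, zero_div]
      have hg := gibbs (fun y => margWY p K (w, y) / outW p K w) (QY w)
        (fun y => div_nonneg (margWY_nonneg hp hKch w y) hMpos.le) hk1 (hQY0 w) hvloc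
      have h0 : 0 ≤ - Real.logb 2 (∑ y, QY w y) := by
        rw [neg_nonneg]
        exact Real.logb_nonpos (by norm_num)
          (Finset.sum_nonneg fun y _ => hQY0 w y) (hQY1 w)
      have hrw : ∑ y, margWY p K (w, y) *
          (Real.logb 2 (margWY p K (w, y) / outW p K w) - Real.logb 2 (QY w y))
          = outW p K w * ∑ y, (margWY p K (w, y) / outW p K w) *
            Real.logb 2 ((margWY p K (w, y) / outW p K w) / QY w y) := by
        rw [Finset.mul_sum]
        refine Finset.sum_congr rfl fun y _ => ?_
        rcases eq_or_ne (margWY p K (w, y)) 0 with hm | hm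
        · rw [hm, zero_mul, zero_div, zero_mul, mul_zero]
        · have hQYne : QY w y ≠ 0 := by
            intro h'
            exact hm (hvanY w y h')
          have hdivne : margWY p K (w, y) / outW p K w ≠ 0 := div_ne_zero hm hM
          rw [Real.logb_div hdivne hQYne]
          field_simp
      rw [hrw]
      exact mul_nonneg hMpos.le (le_trans h0 hg)
  -- per-term expansion
  have hterm : ∀ (a : 𝒳 × 𝒴) (w : 𝒲), p a * K a w * brQ a w =
      p a * K a w * Real.logb 2 (K a w / outW p K w)
      + lam1 * (p a * K a w * (- Real.logb 2 (margWX p K (w, a.1) / outW p K w)))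
      + lam2 * (p a * K a w * (- Real.logb 2 (margWY p K (w, a.2) / outW p K w)))
      - lam1 * r1 * (p a * K a w) - lam2 * r2 * (p a * K a w)
      + p a * K a w * Real.logb 2 (outW p K w / QW w)
      + lam1 * (p a * K a w * (Real.logb 2 (margWX p K (w, a.1) / outW p K w)
          - Real.logb 2 (QX w a.1)))
      + lam2 * (p a * K a w * (Real.logb 2 (margWY p K (w, a.2) / outW p K w)
          - Real.logb 2 (QY w a.2))) := by
    intro a w
    rcases eq_or_ne (p a * K a w) 0 with h0 | h0
    · rw [h0]
      ring
    · obtain ⟨hpa, hKa, hQWpos, hcnd⟩ := hfacts a w h0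
      have hpK : 0 < p a * K a w := mul_pos hpa hKa
      have houtpos : 0 < outW p K w := lt_of_lt_of_le hpK (pK_le_outW hp hKch a w)
      have hmX : 0 < margWX p K (w, a.1) :=
        lt_of_lt_of_le hpK (pK_le_margWX hp hKch a.1 a.2 w)
      have hmY : 0 < margWY p K (w, a.2) :=
        lt_of_lt_of_le hpK (pK_le_margWY hp hKch a.1 a.2 w)
      rw [hbrQ]
      dsimp only
      rw [Real.logb_div hKa.ne' hQWpos.ne', Real.logb_div hKa.ne' houtpos.ne',
        Real.logb_div hmX.ne' houtpos.ne', Real.logb_div hmY.ne' houtpos.ne',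
        Real.logb_div houtpos.ne' hQWpos.ne']
      ring
  have pull : ∀ (cst : ℝ) (f : 𝒳 × 𝒴 → 𝒲 → ℝ),
      ∑ a : 𝒳 × 𝒴, ∑ w, cst * f a w = cst * ∑ a : 𝒳 × 𝒴, ∑ w, f a w := by
    intro cst f
    rw [Finset.mul_sum]
    exact Finset.sum_congr rfl fun a _ => by rw [Finset.mul_sum]
  have hsum1 : ∑ a : 𝒳 × 𝒴, ∑ w, p a * K a w = 1 := by
    calc ∑ a : 𝒳 × 𝒴, ∑ w, p a * K a w = ∑ a : 𝒳 × 𝒴, p a :=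
          Finset.sum_congr rfl fun a _ => by rw [← Finset.mul_sum, (hKch a).2, mul_one]
      _ = 1 := hp.2
  rw [Finset.sum_congr rfl (fun a (_ : a ∈ Finset.univ) =>
    Finset.sum_congr rfl (fun w _ => hterm a w))]
  simp only [Finset.sum_add_distrib, Finset.sum_sub_distrib]
  rw [pull lam1 (fun a w => p a * K a w * (- Real.logb 2 (margWX p K (w, a.1) / outW p K w))),
    pull lam2 (fun a w => p a * K a w * (- Real.logb 2 (margWY p K (w, a.2) / outW p K w))),
    pull (lam1 * r1) (fun a w => p a * K a w),
    pull (lam2 * r2) (fun a w => p a * K a w),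
    pull lam1 (fun a w => p a * K a w * (Real.logb 2 (margWX p K (w, a.1) / outW p K w)
      - Real.logb 2 (QX w a.1))),
    pull lam2 (fun a w => p a * K a w * (Real.logb 2 (margWY p K (w, a.2) / outW p K w)
      - Real.logb 2 (QY w a.2))),
    ← idI hp hKch, ← idX hp hKch, ← idY hp hKch, hsum1]
  rw [sumOut hp hKch (fun w => Real.logb 2 (outW p K w / QW w)),
    sumMX (p := p) (K := K) (fun w x => Real.logb 2 (margWX p K (w, x) / outW p K w)
      - Real.logb 2 (QX w x)),
    sumMY (p := p) (K := K) (fun w y => Real.logb 2 (margWY p K (w, y) / outW p K w)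
      - Real.logb 2 (QY w y))]
  have m1 := mul_nonneg hl1 hTX
  have m2 := mul_nonneg hl2 hTY
  linarith [hTW]


lemma nuF_induced_pos {𝒲 : Type*} [Fintype 𝒲] (hp : IsProb p) {K : 𝒳 × 𝒴 → 𝒲 → ℝ}
    (hK : IsChannel K) (r1 r2 lam1 lam2 : ℝ) (a : 𝒳 × 𝒴) (hpa : 0 < p a) :
    0 < nuF r1 r2 lam1 lam2 (outW p K) (condXW p K) (condYW p K) a.1 a.2 := by
  obtain ⟨w0, hw0⟩ : ∃ w, K a w ≠ 0 := by
    by_contra h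
    push_neg at h
    have : (1:ℝ) = 0 := by
      rw [← (hK a).2]
      exact Finset.sum_eq_zero fun w _ => h w
    norm_num at this
  have hKpos : 0 < K a w0 := ((hK a).1 w0).lt_or_eq.resolve_right (Ne.symm hw0)
  have hpK : 0 < p a * K a w0 := mul_pos hpa hKpos
  have hout : 0 < outW p K w0 := lt_of_lt_of_le hpK (pK_le_outW hp hK a w0)
  have hmX : 0 < margWX p K (w0, a.1) := lt_of_lt_of_le hpK (pK_le_margWX hp hK a.1 a.2 w0)
  have hmY : 0 < margWY p K (w0, a.2) := lt_of_lt_of_le hpK (pK_le_margWY hp hK a.1 a.2 w0)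
  have hcx : 0 < condXW p K w0 a.1 := div_pos hmX hout
  have hcy : 0 < condYW p K w0 a.2 := div_pos hmY hout
  apply Finset.sum_pos'
  · intro w _
    apply mul_nonneg (outW_nonneg hp hK w)
    rcases em (condXW p K w a.1 = 0 ∨ condYW p K w a.2 = 0) with h | h
    · rw [if_pos h]
    · rw [if_neg h]
      exact (Real.rpow_pos_of_pos (by norm_num) _).le
  · refine ⟨w0, Finset.mem_univ w0, ?_⟩
    rw [if_neg (by push_neg; exact ⟨hcx.ne', hcy.ne'⟩)]
    exact mul_pos hout (Real.rpow_pos_of_pos (by norm_num) _)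

lemma logb_half_le {x y : ℝ} (hx : 0 < x) (hy : 0 < y) :
    (1/2) * Real.logb 2 x + (1/2) * Real.logb 2 y
      ≤ Real.logb 2 ((1/2)*x + (1/2)*y) := by
  have hm : (0:ℝ) < (1/2)*x + (1/2)*y := by linarith
  have hs : Real.sqrt (x*y) ≤ (1/2)*x + (1/2)*y := by
    rw [show (1/2)*x + (1/2)*y = Real.sqrt (((1/2)*x + (1/2)*y)^2) by
      rw [Real.sqrt_sq (by positivity)]]
    apply Real.sqrt_le_sqrt
    nlinarith [sq_nonneg (x - y)]
  have hlog : (1/2) * Real.logb 2 x + (1/2) * Real.logb 2 y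
      = Real.logb 2 (Real.sqrt (x*y)) := by
    rw [Real.logb, Real.logb, Real.logb, Real.log_sqrt (by positivity),
      Real.log_mul hx.ne' hy.ne']
    ring
  rw [hlog]
  exact Real.logb_le_logb_of_le (by norm_num) (Real.sqrt_pos.mpr (by positivity)) hs

lemma logb_half_eq {x y : ℝ} (hx : 0 < x) (hy : 0 < y)
    (he : (1/2) * Real.logb 2 x + (1/2) * Real.logb 2 y
      = Real.logb 2 ((1/2)*x + (1/2)*y)) : x = y := by
  have hm : (0:ℝ) < (1/2)*x + (1/2)*y := by linarith
  have hlog : (1/2) * Real.logb 2 x + (1/2) * Real.logb 2 y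
      = Real.logb 2 (Real.sqrt (x*y)) := by
    rw [Real.logb, Real.logb, Real.logb, Real.log_sqrt (by positivity),
      Real.log_mul hx.ne' hy.ne']
    ring
  rw [hlog] at he
  have hsqpos : 0 < Real.sqrt (x*y) := Real.sqrt_pos.mpr (by positivity)
  have hinj : Real.sqrt (x*y) = (1/2)*x + (1/2)*y := by
    have := Real.logb_injOn_pos (b := 2) (by norm_num)
      (Set.mem_Ioi.mpr hsqpos) (Set.mem_Ioi.mpr hm)
    exact this he
  have hsq : x*y = ((1/2)*x + (1/2)*y)^2 := by
    have h2 := congrArg (fun t => t^2) hinj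
    simpa [Real.sq_sqrt (by positivity : (0:ℝ) ≤ x*y)] using h2
  have h3 : (x - y)^2 ≤ 0 := by nlinarith
  have h4 : (x - y)^2 = 0 := le_antisymm h3 (sq_nonneg _)
  have h5 : x - y = 0 := by
    exact pow_eq_zero_iff (by norm_num) |>.mp h4
  linarith

end Chains

set_option maxHeartbeats 3200000 in
/-- Lemma 2: for any two optimal test channels achieving
`R(r1*,r2*|P_XY)`, the corresponding functions `Λ` (built from the induced
output and conditional distributions) agree on the support of `P_XY`; hence
the tilted information density is well-defined irrespective of the choice of
optimal test channel. -/
theorem tilted_info_well_defined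
    {𝒳 𝒴 : Type*} [Fintype 𝒳] [Fintype 𝒴]
    (p : 𝒳 × 𝒴 → ℝ) (hp : IsProb p)
    (r1s r2s : ℝ) (hr1 : 0 < r1s) (hr2 : 0 < r2s)
    (hR : 0 < Rgw p r1s r2s)
    (lam1 lam2 : ℝ)
    (hd1 : HasDerivAt (fun r => Rgw p r r2s) (-lam1) r1s)
    (hd2 : HasDerivAt (fun r => Rgw p r1s r) (-lam2) r2s)
    (hl1 : 0 < lam1) (hl2 : 0 < lam2)
    {k1 k2 : ℕ} (K1 : 𝒳 × 𝒴 → Fin k1 → ℝ) (K2 : 𝒳 × 𝒴 → Fin k2 → ℝ)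
    (h1 : IsOptChannel p r1s r2s K1) (h2 : IsOptChannel p r1s r2s K2) :
    ∀ x y, 0 < p (x, y) →
      tiltedInfo p r1s r2s lam1 lam2 K1 x y = tiltedInfo p r1s r2s lam1 lam2 K2 x y := by
  classical
  intro x y hpxy
  obtain ⟨hc1, hK1, hX1, hY1, hI1⟩ := h1
  obtain ⟨hc2, hK2, hX2, hY2, hI2⟩ := h2
  obtain ⟨E1, hE1⟩ : ∃ e, e = ∑ a : 𝒳 × 𝒴,
    p a * Lam r1s r2s lam1 lam2 (outW p K1) (condXW p K1) (condYW p K1) a.1 a.2 := ⟨_, rfl⟩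
  obtain ⟨E2, hE2⟩ : ∃ e, e = ∑ a : 𝒳 × 𝒴,
    p a * Lam r1s r2s lam1 lam2 (outW p K2) (condXW p K2) (condYW p K2) a.1 a.2 := ⟨_, rfl⟩
  -- upper bounds
  have hup1 : E1 ≤ Rgw p r1s r2s := by
    have h := chain1 hp hK1 r1s r2s lam1 lam2
    have hs1 : lam1 * (condEntX p K1 - r1s) ≤ 0 :=
      mul_nonpos_of_nonneg_of_nonpos hl1.le (by linarith)
    have hs2 : lam2 * (condEntY p K1 - r2s) ≤ 0 :=
      mul_nonpos_of_nonneg_of_nonpos hl2.le (by linarith)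
    rw [hE1, ← hI1]
    linarith
  have hup2 : E2 ≤ Rgw p r1s r2s := by
    have h := chain1 hp hK2 r1s r2s lam1 lam2
    have hs1 : lam1 * (condEntX p K2 - r1s) ≤ 0 :=
      mul_nonpos_of_nonneg_of_nonpos hl1.le (by linarith)
    have hs2 : lam2 * (condEntY p K2 - r2s) ≤ 0 :=
      mul_nonpos_of_nonneg_of_nonpos hl2.le (by linarith)
    rw [hE2, ← hI2]
    linarith
  -- lower bounds
  have hlow1 : Rgw p r1s r2s ≤ E1 := by
    obtain ⟨C, hCch, hCle⟩ := chain2 hp (outW_nonneg hp hK1) (outW_sum_one hp hK1)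
      (condXW_nonneg hp hK1) (condXW_sum_le) (condYW_nonneg hp hK1) (condYW_sum_le)
      r1s r2s lam1 lam2 hl1.le hl2.le
      (fun a hpa => nuF_induced_pos hp hK1 r1s r2s lam1 lam2 a hpa)
    rw [hE1]
    exact (core_bound hp hr1 hr2 hd1 hd2 hl1 hl2 hCch).trans hCle
  have hlow2 : Rgw p r1s r2s ≤ E2 := by
    obtain ⟨C, hCch, hCle⟩ := chain2 hp (outW_nonneg hp hK2) (outW_sum_one hp hK2)
      (condXW_nonneg hp hK2) (condXW_sum_le) (condYW_nonneg hp hK2) (condYW_sum_le)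
      r1s r2s lam1 lam2 hl1.le hl2.le
      (fun a hpa => nuF_induced_pos hp hK2 r1s r2s lam1 lam2 a hpa)
    rw [hE2]
    exact (core_bound hp hr1 hr2 hd1 hd2 hl1 hl2 hCch).trans hCle
  have hE1R : E1 = Rgw p r1s r2s := le_antisymm hup1 hlow1
  have hE2R : E2 = Rgw p r1s r2s := le_antisymm hup2 hlow2
  -- the mixture Q
  obtain ⟨QWm, hQWm⟩ : ∃ f : Fin k1 ⊕ Fin k2 → ℝ,
    f = Sum.elim (fun w => (1/2) * outW p K1 w) (fun w => (1/2) * outW p K2 w) := ⟨_, rfl⟩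
  obtain ⟨QXm, hQXm⟩ : ∃ f : Fin k1 ⊕ Fin k2 → 𝒳 → ℝ,
    f = Sum.elim (condXW p K1) (condXW p K2) := ⟨_, rfl⟩
  obtain ⟨QYm, hQYm⟩ : ∃ f : Fin k1 ⊕ Fin k2 → 𝒴 → ℝ,
    f = Sum.elim (condYW p K1) (condYW p K2) := ⟨_, rfl⟩
  have hQWm0 : ∀ w, 0 ≤ QWm w := by
    intro w
    rw [hQWm]
    rcases w with w | w
    · exact mul_nonneg (by norm_num) (outW_nonneg hp hK1 w)
    · exact mul_nonneg (by norm_num) (outW_nonneg hp hK2 w)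
  have hQWm1 : ∑ w, QWm w = 1 := by
    rw [hQWm, Fintype.sum_sum_type]
    simp only [Sum.elim_inl, Sum.elim_inr]
    rw [← Finset.mul_sum, ← Finset.mul_sum, outW_sum_one hp hK1, outW_sum_one hp hK2]
    norm_num
  have hQXm0 : ∀ w x', 0 ≤ QXm w x' := by
    intro w x'
    rw [hQXm]
    rcases w with w | w
    · exact condXW_nonneg hp hK1 w x'
    · exact condXW_nonneg hp hK2 w x'
  have hQXm1 : ∀ w, ∑ x', QXm w x' ≤ 1 := by
    intro w
    rw [hQXm]
    rcases w with w | w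
    · exact condXW_sum_le w
    · exact condXW_sum_le w
  have hQYm0 : ∀ w y', 0 ≤ QYm w y' := by
    intro w y'
    rw [hQYm]
    rcases w with w | w
    · exact condYW_nonneg hp hK1 w y'
    · exact condYW_nonneg hp hK2 w y'
  have hQYm1 : ∀ w, ∑ y', QYm w y' ≤ 1 := by
    intro w
    rw [hQYm]
    rcases w with w | w
    · exact condYW_sum_le w
    · exact condYW_sum_le w
  have hmixν : ∀ (x' : 𝒳) (y' : 𝒴), nuF r1s r2s lam1 lam2 QWm QXm QYm x' y'
      = (1/2) * nuF r1s r2s lam1 lam2 (outW p K1) (condXW p K1) (condYW p K1) x' y'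
        + (1/2) * nuF r1s r2s lam1 lam2 (outW p K2) (condXW p K2) (condYW p K2) x' y' := by
    intro x' y'
    unfold nuF
    rw [hQWm, hQXm, hQYm, Fintype.sum_sum_type]
    rw [Finset.mul_sum, Finset.mul_sum]
    congr 1
    · refine Finset.sum_congr rfl fun w _ => ?_
      simp only [Sum.elim_inl]
      ring
    · refine Finset.sum_congr rfl fun w _ => ?_
      simp only [Sum.elim_inr]
      ring
  have hνm : ∀ a : 𝒳 × 𝒴, 0 < p a → 0 < nuF r1s r2s lam1 lam2 QWm QXm QYm a.1 a.2 := by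
    intro a hpa
    rw [hmixν a.1 a.2]
    have n1 := nuF_induced_pos hp hK1 r1s r2s lam1 lam2 a hpa
    have n2 := nuF_induced_pos hp hK2 r1s r2s lam1 lam2 a hpa
    linarith
  obtain ⟨Em, hEm⟩ : ∃ e, e = ∑ a : 𝒳 × 𝒴,
    p a * Lam r1s r2s lam1 lam2 QWm QXm QYm a.1 a.2 := ⟨_, rfl⟩
  have hlowm : Rgw p r1s r2s ≤ Em := by
    obtain ⟨C, hCch, hCle⟩ := chain2 hp hQWm0 hQWm1 hQXm0 hQXm1 hQYm0 hQYm1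
      r1s r2s lam1 lam2 hl1.le hl2.le hνm
    rw [hEm]
    exact (core_bound hp hr1 hr2 hd1 hd2 hl1 hl2 hCch).trans hCle
  obtain ⟨f, hfapp⟩ : ∃ f : 𝒳 × 𝒴 → ℝ, ∀ a, f a = p a *
      ((1/2) * Lam r1s r2s lam1 lam2 (outW p K1) (condXW p K1) (condYW p K1) a.1 a.2
        + (1/2) * Lam r1s r2s lam1 lam2 (outW p K2) (condXW p K2) (condYW p K2) a.1 a.2
        - Lam r1s r2s lam1 lam2 QWm QXm QYm a.1 a.2) := ⟨_, fun a => rfl⟩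
  have hbr : ∀ a : 𝒳 × 𝒴, 0 < p a →
      0 ≤ (1/2) * Lam r1s r2s lam1 lam2 (outW p K1) (condXW p K1) (condYW p K1) a.1 a.2
        + (1/2) * Lam r1s r2s lam1 lam2 (outW p K2) (condXW p K2) (condYW p K2) a.1 a.2
        - Lam r1s r2s lam1 lam2 QWm QXm QYm a.1 a.2 := by
    intro a hpa
    have n1 := nuF_induced_pos hp hK1 r1s r2s lam1 lam2 a hpa
    have n2 := nuF_induced_pos hp hK2 r1s r2s lam1 lam2 a hpa
    have hcc := logb_half_le n1 n2
    rw [Lam_eq_nuF, Lam_eq_nuF, Lam_eq_nuF, hmixν a.1 a.2]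
    linarith
  have hf0 : ∀ a ∈ Finset.univ, 0 ≤ f a := by
    intro a _
    rw [hfapp]
    rcases (hp.1 a).lt_or_eq with hpa | hpa
    · exact mul_nonneg hpa.le (hbr a hpa)
    · rw [← hpa, zero_mul]
  have hfsum : ∑ a, f a = (1/2) * E1 + (1/2) * E2 - Em := by
    have hper : ∀ a : 𝒳 × 𝒴, f a =
        (1/2) * (p a * Lam r1s r2s lam1 lam2 (outW p K1) (condXW p K1) (condYW p K1) a.1 a.2)
        + (1/2) * (p a * Lam r1s r2s lam1 lam2 (outW p K2) (condXW p K2) (condYW p K2) a.1 a.2)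
        - p a * Lam r1s r2s lam1 lam2 QWm QXm QYm a.1 a.2 := by
      intro a
      rw [hfapp]
      ring
    rw [Finset.sum_congr rfl (fun a (_ : a ∈ Finset.univ) => hper a)]
    rw [Finset.sum_sub_distrib, Finset.sum_add_distrib, ← Finset.mul_sum, ← Finset.mul_sum,
      ← hE1, ← hE2, ← hEm]
  have hfzero : ∑ a, f a = 0 := by
    have hle : ∑ a, f a ≤ 0 := by
      rw [hfsum, hE1R, hE2R]
      linarith
    exact le_antisymm hle (Finset.sum_nonneg hf0)
  have hall := (Finset.sum_eq_zero_iff_of_nonneg hf0).mp hfzero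
  have hxy := hall (x, y) (Finset.mem_univ _)
  rw [hfapp] at hxy
  have hbrz : (1/2) * Lam r1s r2s lam1 lam2 (outW p K1) (condXW p K1) (condYW p K1) x y
      + (1/2) * Lam r1s r2s lam1 lam2 (outW p K2) (condXW p K2) (condYW p K2) x y
      - Lam r1s r2s lam1 lam2 QWm QXm QYm x y = 0 :=
    (mul_eq_zero.mp hxy).resolve_left hpxy.ne'
  have n1 := nuF_induced_pos hp hK1 r1s r2s lam1 lam2 (x, y) hpxy
  have n2 := nuF_induced_pos hp hK2 r1s r2s lam1 lam2 (x, y) hpxy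
  have heq : (1/2) * Real.logb 2
        (nuF r1s r2s lam1 lam2 (outW p K1) (condXW p K1) (condYW p K1) x y)
      + (1/2) * Real.logb 2
        (nuF r1s r2s lam1 lam2 (outW p K2) (condXW p K2) (condYW p K2) x y)
      = Real.logb 2
        ((1/2) * nuF r1s r2s lam1 lam2 (outW p K1) (condXW p K1) (condYW p K1) x y
          + (1/2) * nuF r1s r2s lam1 lam2 (outW p K2) (condXW p K2) (condYW p K2) x y) := by
    rw [Lam_eq_nuF, Lam_eq_nuF, Lam_eq_nuF, hmixν x y] at hbrz
    linarith
  have hνeq := logb_half_eq n1 n2 heq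
  show Lam r1s r2s lam1 lam2 (outW p K1) (condXW p K1) (condYW p K1) x y
      = Lam r1s r2s lam1 lam2 (outW p K2) (condXW p K2) (condYW p K2) x y
  rw [Lam_eq_nuF, Lam_eq_nuF, hνeq]
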